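/- arXiv:1903.10331 — 2 statements merged into one kernel-verified Lean document; each statement's English description precedes it below -/
import Mathlib

section
/- Let α : H → H be a semilinear bijection with α(1) = 1 and let L ∈ 𝒜. Then, for all x ∈ H and z ∈ L: (i) if α maps the class Sℓ(L) onto Sℓ(α(L)), then α(x·z) = α(x)·α(z); (ii) if α maps Sℓ(L) onto Sr(α(L)), then α(x·z) = α(z)·α(x); (iii) if α maps Sr(L) onto Sℓ(α(L)), then α(z·x) = α(x)·α(z); (iv) if α maps Sr(L) onto Sr(α(L)), then α(z·x) = α(z)·α(x). Here α maps a set 𝒮 of lines onto a set 𝒮' of lines means {α(N) | N ∈ 𝒮} = 𝒮'. -/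
variable (F H : Type*) [Field F] [DivisionRing H] [Algebra F H]

/-- A *line* of the projective space `ℙ(H_F)`: a 2-dimensional `F`-subspace of `H`. -/
abbrev Line := {M : Submodule F H // Module.finrank F M = 2}

/-- `M ∥ℓ N` : there is `g ≠ 0` with `N = g·M`. -/
def LeftPar (M N : Submodule F H) : Prop :=
  ∃ g : H, g ≠ 0 ∧ (N : Set H) = (fun m => g * m) '' (M : Set H)

/-- `M ∥r N` : there is `g ≠ 0` with `N = M·g`. -/
def RightPar (M N : Submodule F H) : Prop :=
  ∃ g : H, g ≠ 0 ∧ (N : Set H) = (fun m => m * g) '' (M : Set H)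

/-- The left parallel class `Sℓ(M) = {N | N ∥ℓ M}`. -/
def leftClass (M : Line F H) : Set (Line F H) := {N | LeftPar F H N.1 M.1}

/-- The right parallel class `Sr(M) = {N | N ∥r M}`. -/
def rightClass (M : Line F H) : Set (Line F H) := {N | RightPar F H N.1 M.1}

/-- The `∥`-class `S(M) = {N | N ∥ M}`. -/
def parClass (par : Line F H → Line F H → Prop) (M : Line F H) : Set (Line F H) :=
  {N | par N M}

/-- A parallelism: an equivalence relation on lines such that for every `x ≠ 0`
and every line `M` there is exactly one line `N` with `x ∈ N` and `N ∥ M`. -/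
def IsParallelism (par : Line F H → Line F H → Prop) : Prop :=
  Equivalence par ∧
    ∀ x : H, x ≠ 0 → ∀ M : Line F H, ∃! N : Line F H, x ∈ N.1 ∧ par N M

/-- A Clifford-like parallelism: every `∥`-class is a left or a right parallel class. -/
def IsCliffordLike (par : Line F H → Line F H → Prop) : Prop :=
  IsParallelism F H par ∧
    ∀ M : Line F H,
      parClass F H par M = leftClass F H M ∨ parClass F H par M = rightClass F H M

/-- The star `𝒜` of lines through `F·1`, i.e. the lines containing `1`. -/
def starLines : Set (Line F H) := {L | (1 : H) ∈ L.1}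

/-- The set `ℱ` of lines of `𝒜` whose `∥`-class is a left parallel class. -/
def calF (par : Line F H → Line F H → Prop) : Set (Line F H) :=
  {L | (1 : H) ∈ L.1 ∧ parClass F H par L = leftClass F H L}

/-- A semilinear bijection of `H` (over some field automorphism of `F`). -/
def IsSemilinear (β : H → H) : Prop :=
  Function.Bijective β ∧ (∀ x y : H, β (x + y) = β x + β y) ∧
    ∃ σ : F ≃+* F, ∀ (a : F) (x : H), β (a • x) = σ a • β x

/-- `β` preserves the parallelism `par`: for all lines `M, N`,
`M ∥ N ↔ β(M) ∥ β(N)`, where `β(M)` denotes the line whose carrier is `β '' M`. -/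
def Preserves (β : H → H) (par : Line F H → Line F H → Prop) : Prop :=
  ∀ M N M' N' : Line F H,
    (M'.1 : Set H) = β '' (M.1 : Set H) →
    (N'.1 : Set H) = β '' (N.1 : Set H) →
    (par M N ↔ par M' N')

/-- The image `β(𝒢)` of a set of lines under `β`. -/
def imageLines (β : H → H) (G : Set (Line F H)) : Set (Line F H) :=
  {L' | ∃ L ∈ G, (L'.1 : Set H) = β '' (L.1 : Set H)}

/-- The centre of `H` is exactly `F·1`. -/
def CenterEqF : Prop :=
  ∀ z : H, (∀ x : H, z * x = x * z) ↔ ∃ a : F, z = algebraMap F H a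

/-- Ring automorphism of `H`, as a plain function. -/
def IsRingAutFn (α : H → H) : Prop :=
  Function.Bijective α ∧ (∀ x y : H, α (x + y) = α x + α y) ∧ α 1 = 1 ∧
    ∀ x y : H, α (x * y) = α x * α y

/-- Ring antiautomorphism of `H`, as a plain function. -/
def IsRingAntiAutFn (α : H → H) : Prop :=
  Function.Bijective α ∧ (∀ x y : H, α (x + y) = α x + α y) ∧ α 1 = 1 ∧
    ∀ x y : H, α (x * y) = α y * α x

open Module Submodule

section MyAux

variable {F H}

theorem aux_finrank_span_pair {v w : H} (hv : v ≠ 0) (hw : w ∉ Submodule.span F {v}) :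
    Module.finrank F (Submodule.span F ({v, w} : Set H)) = 2 := by
  have li : LinearIndependent F ![v, w] := (LinearIndependent.pair_iff' hv).mpr (by
    intro a ha
    exact hw (ha ▸ Submodule.smul_mem _ a (Submodule.mem_span_singleton_self v)))
  have hr : Set.range ![v, w] = ({v, w} : Set H) := by
    simp [Matrix.range_cons, Matrix.range_empty, Set.pair_comm w v]
  have := finrank_span_eq_card li
  rwa [hr, Fintype.card_fin] at this

/-- left multiplication by a nonzero element as a linear equivalence -/
noncomputable def mulLeftEquiv (y : H) (hy : y ≠ 0) : H ≃ₗ[F] H :=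
  LinearEquiv.ofLinear (LinearMap.mulLeft F y) (LinearMap.mulLeft F y⁻¹)
    (by ext x; simp [← mul_assoc, mul_inv_cancel₀ hy])
    (by ext x; simp [← mul_assoc, inv_mul_cancel₀ hy])

noncomputable def mulRightEquiv (y : H) (hy : y ≠ 0) : H ≃ₗ[F] H :=
  LinearEquiv.ofLinear (LinearMap.mulRight F y) (LinearMap.mulRight F y⁻¹)
    (by ext x; simp [mul_assoc, inv_mul_cancel₀ hy])
    (by ext x; simp [mul_assoc, mul_inv_cancel₀ hy])

@[simp] theorem mulLeftEquiv_apply (y : H) (hy : y ≠ 0) (x : H) :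
    mulLeftEquiv (F := F) y hy x = y * x := rfl

@[simp] theorem mulRightEquiv_apply (y : H) (hy : y ≠ 0) (x : H) :
    mulRightEquiv (F := F) y hy x = x * y := rfl

theorem aux_quad (hcenter : ∀ z : H, (∀ x : H, z * x = x * z) ↔ ∃ a : F, z = algebraMap F H a) (hdim : Module.finrank F H = 4)
    (u : H) : u * u ∈ Submodule.span F ({1, u} : Set H) := by
  have hfd : FiniteDimensional F H :=
    Module.finite_of_finrank_pos (by rw [hdim]; norm_num)
  by_cases hc : ∀ x : H, u * x = x * u
  · obtain ⟨a, rfl⟩ := (hcenter u).mp hc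
    have : algebraMap F H a * algebraMap F H a = a • algebraMap F H a := by
      rw [Algebra.smul_def]
    rw [this]
    exact Submodule.smul_mem _ _ (Submodule.subset_span (by simp))
  · -- the centralizer of u as an F-submodule
    set V : Submodule F H :=
      { carrier := {x | u * x = x * u}
        add_mem' := by
          intro a b (ha : u * a = a * u) (hb : u * b = b * u)
          show u * (a + b) = (a + b) * u
          rw [mul_add, add_mul, ha, hb]
        zero_mem' := by simp
        smul_mem' := by
          intro c x (hx : u * x = x * u)
          show u * (c • x) = (c • x) * u
          rw [mul_smul_comm, smul_mul_assoc, hx] } with hV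
    have hmemV : ∀ x : H, x ∈ V ↔ u * x = x * u := fun x => Iff.rfl
    have honeV : (1 : H) ∈ V := by rw [hmemV]; simp
    have huV : u ∈ V := by rw [hmemV]
    have hmul : ∀ x ∈ V, ∀ y ∈ V, x * y ∈ V := by
      intro x hx y hy
      rw [hmemV] at hx hy ⊢
      rw [← mul_assoc, hx, mul_assoc, hy, ← mul_assoc]
    have hinv : ∀ x ∈ V, x ≠ 0 → x⁻¹ ∈ V := by
      intro x hx hx0
      rw [hmemV] at hx ⊢
      have h1 : x⁻¹ * (u * x) * x⁻¹ = x⁻¹ * (x * u) * x⁻¹ := by rw [hx]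
      rw [← mul_assoc, ← mul_assoc, inv_mul_cancel₀ hx0, one_mul, mul_assoc,
        mul_inv_cancel₀ hx0, mul_one] at h1
      exact h1.symm
    have hVne : V ≠ ⊤ := by
      intro htop
      exact hc (fun x => by have : x ∈ V := htop ▸ Submodule.mem_top; exact this)
    obtain ⟨w, hw⟩ : ∃ w : H, w ∉ V := by
      by_contra hall
      push_neg at hall
      exact hVne (Submodule.eq_top_iff'.mpr hall)
    have hw0 : w ≠ 0 := fun h => hw (h ▸ V.zero_mem)
    set W : Submodule F H := V.map (mulLeftEquiv (F := F) w hw0).toLinearMap with hW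
    have hVW : V ⊓ W = ⊥ := by
      rw [Submodule.eq_bot_iff]
      rintro x ⟨hxV, y, hyV, rfl⟩
      simp only [LinearEquiv.coe_coe, LinearMap.coe_coe, mulLeftEquiv_apply] at hxV ⊢
      by_contra hne
      have hy0 : y ≠ 0 := by rintro rfl; exact hne (mul_zero w)
      have : w = (w * y) * y⁻¹ := by rw [mul_assoc, mul_inv_cancel₀ hy0, mul_one]
      exact hw (this ▸ hmul _ hxV _ (hinv _ hyV hy0))
    have hWrank : finrank F W = finrank F V := by
      rw [hW]; exact LinearEquiv.finrank_map_eq _ _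
    have hsum := Submodule.finrank_sup_add_finrank_inf_eq V W
    rw [hVW, finrank_bot, add_zero, hWrank] at hsum
    have hle : finrank F ↥(V ⊔ W) ≤ 4 := hdim ▸ Submodule.finrank_le _
    have hVle : finrank F V ≤ 2 := by omega
    -- now span {1, u} = V
    have huF : u ∉ Submodule.span F ({1} : Set H) := by
      intro hu
      rw [Submodule.mem_span_singleton] at hu
      obtain ⟨a, rfl⟩ := hu
      refine hc fun x => ?_
      rw [smul_mul_assoc, mul_smul_comm, one_mul, mul_one]
    have hpair : finrank F (Submodule.span F ({1, u} : Set H)) = 2 :=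
      aux_finrank_span_pair one_ne_zero huF
    have hsub : Submodule.span F ({1, u} : Set H) ≤ V := by
      rw [Submodule.span_le]
      rintro x (rfl | rfl)
      exacts [honeV, huV]
    have : Submodule.span F ({1, u} : Set H) = V :=
      Submodule.eq_of_le_of_finrank_le hsub (by omega)
    exact this ▸ hmul u huV u huV

theorem aux_line_basis {M : Submodule F H} (h2 : Module.finrank F ↥M = 2) (h1 : (1:H) ∈ M) :
    ∃ t ∈ M, t ∉ Submodule.span F ({1} : Set H) ∧ M = Submodule.span F ({1, t} : Set H) := by
  haveI hfdM : FiniteDimensional F ↥M := Module.finite_of_finrank_pos (by rw [h2]; norm_num)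
  have hle : Submodule.span F ({1}:Set H) ≤ M := by
    rw [Submodule.span_le]; exact Set.singleton_subset_iff.mpr h1
  have hne : Submodule.span F ({1}:Set H) ≠ M := by
    intro h
    have := finrank_span_singleton (K := F) (one_ne_zero (α := H))
    rw [h, h2] at this; simp at this
  obtain ⟨t, htM, hts⟩ := SetLike.exists_of_lt (hle.lt_of_ne hne)
  have hsub : Submodule.span F ({1, t} : Set H) ≤ M := by
    rw [Submodule.span_le]; rintro x (rfl | rfl); exacts [h1, htM]
  refine ⟨t, htM, hts, (Submodule.eq_of_le_of_finrank_le hsub ?_).symm⟩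
  rw [h2, aux_finrank_span_pair one_ne_zero hts]

theorem aux_line_mul_mem (hcenter : ∀ z : H, (∀ x : H, z * x = x * z) ↔ ∃ a : F, z = algebraMap F H a)
    (hdim : Module.finrank F H = 4) {M : Submodule F H}
    (h2 : Module.finrank F ↥M = 2) (h1 : (1:H) ∈ M) : ∀ m ∈ M, ∀ n ∈ M, m * n ∈ M := by
  intro m hm n hn
  by_cases hms : m ∈ Submodule.span F ({1} : Set H)
  · rw [Submodule.mem_span_singleton] at hms
    obtain ⟨a, ha⟩ := hms
    rw [← ha, smul_mul_assoc, one_mul]; exact M.smul_mem a hn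
  · haveI hfdM : FiniteDimensional F ↥M := Module.finite_of_finrank_pos (by rw [h2]; norm_num)
    have hsub : Submodule.span F ({1, m} : Set H) ≤ M := by
      rw [Submodule.span_le]; rintro x (rfl | rfl); exacts [h1, hm]
    have hMeq : M = Submodule.span F ({1, m} : Set H) :=
      (Submodule.eq_of_le_of_finrank_le hsub
        (by rw [h2, aux_finrank_span_pair one_ne_zero hms])).symm
    have hn' : n ∈ Submodule.span F ({1, m} : Set H) := hMeq ▸ hn
    rw [Submodule.mem_span_pair] at hn'
    obtain ⟨a, b, hab⟩ := hn'
    have hq : m * m ∈ M := by rw [hMeq]; exact aux_quad hcenter hdim m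
    rw [← hab]
    have : m * (a • (1:H) + b • m) = a • m + b • (m * m) := by
      rw [mul_add, mul_smul_comm, mul_smul_comm, mul_one]
    rw [this]
    exact M.add_mem (M.smul_mem _ hm) (M.smul_mem _ hq)

theorem aux_line_inv (hcenter : ∀ z : H, (∀ x : H, z * x = x * z) ↔ ∃ a : F, z = algebraMap F H a)
    (hdim : Module.finrank F H = 4) {M : Submodule F H}
    (h2 : Module.finrank F ↥M = 2) (h1 : (1:H) ∈ M) : ∀ m ∈ M, m ≠ 0 → m⁻¹ ∈ M := by
  intro m hm hm0
  haveI hfdM : FiniteDimensional F ↥M := Module.finite_of_finrank_pos (by rw [h2]; norm_num)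
  have hmapsto : ∀ x ∈ M, LinearMap.mulLeft F m x ∈ M := by
    intro x hx
    exact aux_line_mul_mem hcenter hdim h2 h1 m hm x hx
  set f : ↥M →ₗ[F] ↥M := (LinearMap.mulLeft F m).restrict hmapsto with hf
  have hinj : Function.Injective f := by
    intro a b hab
    have h' : m * (a:H) = m * (b:H) := congrArg Subtype.val hab
    exact Subtype.ext (mul_left_cancel₀ hm0 h')
  obtain ⟨k, hk⟩ := (LinearMap.injective_iff_surjective).mp hinj ⟨1, h1⟩
  have hk' : m * (k:H) = 1 := congrArg Subtype.val hk
  rw [inv_eq_of_mul_eq_one_right hk']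
  exact k.2

theorem aux_line_smul_left (hcenter : ∀ z : H, (∀ x : H, z * x = x * z) ↔ ∃ a : F, z = algebraMap F H a)
    (hdim : Module.finrank F H = 4) {M : Submodule F H}
    (h2 : Module.finrank F ↥M = 2) (h1 : (1:H) ∈ M) :
    ∀ m ∈ M, m ≠ 0 → (fun x => m * x) '' (M : Set H) = (M : Set H) := by
  intro m hm hm0
  apply Set.Subset.antisymm
  · rintro _ ⟨x, hx, rfl⟩
    exact aux_line_mul_mem hcenter hdim h2 h1 m hm x hx
  · intro n hn
    refine ⟨m⁻¹ * n, aux_line_mul_mem hcenter hdim h2 h1 m⁻¹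
      (aux_line_inv hcenter hdim h2 h1 m hm hm0) n hn, ?_⟩
    show m * (m⁻¹ * n) = n
    rw [← mul_assoc, mul_inv_cancel₀ hm0, one_mul]

theorem aux_line_smul_right (hcenter : ∀ z : H, (∀ x : H, z * x = x * z) ↔ ∃ a : F, z = algebraMap F H a)
    (hdim : Module.finrank F H = 4) {M : Submodule F H}
    (h2 : Module.finrank F ↥M = 2) (h1 : (1:H) ∈ M) :
    ∀ m ∈ M, m ≠ 0 → (fun x => x * m) '' (M : Set H) = (M : Set H) := by
  intro m hm hm0
  apply Set.Subset.antisymm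
  · rintro _ ⟨x, hx, rfl⟩
    exact aux_line_mul_mem hcenter hdim h2 h1 x hx m hm
  · intro n hn
    refine ⟨n * m⁻¹, aux_line_mul_mem hcenter hdim h2 h1 n hn m⁻¹
      (aux_line_inv hcenter hdim h2 h1 m hm hm0), ?_⟩
    show n * m⁻¹ * m = n
    rw [mul_assoc, inv_mul_cancel₀ hm0, mul_one]

theorem aux_exists_notmem {A B : Submodule F H} (hA : A ≠ ⊤) (hB : B ≠ ⊤) :
    ∃ w : H, w ∉ A ∧ w ∉ B := by
  obtain ⟨a, ha⟩ : ∃ a, a ∉ A := by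
    by_contra h; push_neg at h; exact hA (Submodule.eq_top_iff'.mpr h)
  obtain ⟨b, hb⟩ : ∃ b, b ∉ B := by
    by_contra h; push_neg at h; exact hB (Submodule.eq_top_iff'.mpr h)
  by_cases hab : a ∈ B
  · by_cases hba : b ∈ A
    · refine ⟨a + b, fun h => ha ?_, fun h => hb ?_⟩
      · have := A.sub_mem h hba; simpa using this
      · have := B.sub_mem h hab; simpa using this
    · exact ⟨b, hba, hb⟩
  · exact ⟨a, ha, hab⟩

theorem aux_alpha_zero {α : H → H} (hadd : ∀ x y, α (x+y) = α x + α y) : α 0 = 0 := by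
  have h := hadd 0 0
  rw [add_zero] at h
  exact (left_eq_add.mp h)

theorem aux_alpha_sub {α : H → H} (hadd : ∀ x y, α (x+y) = α x + α y) (x y : H) :
    α (x - y) = α x - α y := by
  have h : α (x - y) + α y = α x := by rw [← hadd, sub_add_cancel]
  exact eq_sub_of_add_eq h

theorem aux_image_span_pair {α : H → H} (hadd : ∀ x y, α (x+y) = α x + α y)
    (σ : F ≃+* F) (hσ : ∀ (a : F) (x : H), α (a • x) = σ a • α x) (v w : H) :
    α '' (Submodule.span F ({v, w} : Set H) : Set H)
      = (Submodule.span F ({α v, α w} : Set H) : Set H) := by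
  ext y
  constructor
  · rintro ⟨x, hx, rfl⟩
    rw [SetLike.mem_coe, Submodule.mem_span_pair] at hx ⊢
    obtain ⟨a, b, rfl⟩ := hx
    exact ⟨σ a, σ b, by rw [hadd, hσ, hσ]⟩
  · intro hy
    rw [SetLike.mem_coe, Submodule.mem_span_pair] at hy
    obtain ⟨c, d, rfl⟩ := hy
    refine ⟨σ.symm c • v + σ.symm d • w, ?_, ?_⟩
    · exact Submodule.add_mem _
        (Submodule.smul_mem _ _ (Submodule.subset_span (by simp)))
        (Submodule.smul_mem _ _ (Submodule.subset_span (by simp)))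
    · rw [hadd, hσ, hσ, σ.apply_symm_apply, σ.apply_symm_apply]

theorem auxA_ll (hcenter : CenterEqF F H) (hdim : Module.finrank F H = 4)
    {α : H → H} (hbij : Function.Bijective α) (hadd : ∀ x y, α (x + y) = α x + α y)
    (σ : F ≃+* F) (hσ : ∀ (a : F) (x : H), α (a • x) = σ a • α x) (h1 : α 1 = 1)
    (L L' : Line F H) (hL : (1 : H) ∈ L.1) (hL' : (L'.1 : Set H) = α '' (L.1 : Set H))
    (h : imageLines F H α (leftClass F H L) = leftClass F H L') :
    ∀ y : H, y ≠ 0 →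
      α '' ((fun m => y * m) '' (L.1 : Set H)) = (fun c => α y * c) '' (L'.1 : Set H) := by
  intro y hy
  obtain ⟨t, htL, hts, hLspan⟩ := aux_line_basis L.2 hL
  have hα0 : α 0 = 0 := aux_alpha_zero hadd
  have hinj := hbij.1
  have hαy0 : α y ≠ 0 := fun h0 => hy (hinj (h0.trans hα0.symm))
  have h1L' : (1:H) ∈ L'.1 := by rw [← SetLike.mem_coe, hL']; exact ⟨1, hL, h1⟩
  set N : Submodule F H := L.1.map (mulLeftEquiv (F := F) y hy).toLinearMap with hN
  have hNset : (N : Set H) = (fun m => y * m) '' (L.1 : Set H) := by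
    rw [hN, Submodule.map_coe]; rfl
  have hNrank : Module.finrank F ↥N = 2 := by
    rw [hN, LinearEquiv.finrank_map_eq]; exact L.2
  have hNspan : N = Submodule.span F ({y, y * t} : Set H) := by
    rw [hN, hLspan, Submodule.map_span]
    congr 1
    rw [Set.image_pair]
    simp
  have hyt : α (y * t) ∉ Submodule.span F ({α y} : Set H) := by
    intro hmem
    rw [Submodule.mem_span_singleton] at hmem
    obtain ⟨c, hc⟩ := hmem
    apply hts
    have he1 : α (y * t) = α (σ.symm c • y) := by rw [hσ, σ.apply_symm_apply, ← hc]
    have he2 : y * t = y * (σ.symm c • 1) := by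
      rw [mul_smul_comm, mul_one]; exact hinj he1
    have he3 := mul_left_cancel₀ hy he2
    rw [Submodule.mem_span_singleton]
    exact ⟨σ.symm c, he3.symm⟩
  set N' : Submodule F H := Submodule.span F ({α y, α (y * t)} : Set H) with hN'
  have hN'set : (N' : Set H) = α '' (N : Set H) := by
    rw [hN', hNspan, aux_image_span_pair hadd σ hσ]
  have hN'rank : Module.finrank F ↥N' = 2 := aux_finrank_span_pair hαy0 hyt
  have hclass : (⟨N, hNrank⟩ : Line F H) ∈ leftClass F H L := by
    refine ⟨y⁻¹, inv_ne_zero hy, ?_⟩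
    rw [hNset, Set.image_image]
    have : (fun x => y⁻¹ * (y * x)) = fun x : H => x := by
      funext x; rw [← mul_assoc, inv_mul_cancel₀ hy, one_mul]
    rw [this, Set.image_id']
  have hmem : (⟨N', hN'rank⟩ : Line F H) ∈ leftClass F H L' := by
    rw [← h]
    exact ⟨⟨N, hNrank⟩, hclass, hN'set⟩
  obtain ⟨g, hg0, hgeq⟩ := hmem
  have hNg : (N' : Set H) = (fun c => g⁻¹ * c) '' (L'.1 : Set H) := by
    rw [hgeq, Set.image_image]
    have : (fun x => g⁻¹ * (g * x)) = fun x : H => x := by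
      funext x; rw [← mul_assoc, inv_mul_cancel₀ hg0, one_mul]
    rw [this, Set.image_id']
  have hαyN' : α y ∈ (N' : Set H) := by
    rw [hN'set, hNset]
    exact ⟨y, ⟨1, hL, mul_one y⟩, rfl⟩
  obtain ⟨m, hmL', hm⟩ := hNg ▸ hαyN'
  have hm' : g⁻¹ * m = α y := hm
  have hm0 : m ≠ 0 := by rintro rfl; rw [mul_zero] at hm'; exact hαy0 hm'.symm
  calc α '' ((fun m => y * m) '' (L.1 : Set H)) = (N' : Set H) := by rw [hN'set, hNset]
    _ = (fun c => g⁻¹ * c) '' (L'.1 : Set H) := hNg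
    _ = (fun c => g⁻¹ * c) '' ((fun c => m * c) '' (L'.1 : Set H)) := by
        rw [aux_line_smul_left hcenter hdim L'.2 h1L' m hmL' hm0]
    _ = (fun c => α y * c) '' (L'.1 : Set H) := by
        rw [Set.image_image]
        have : (fun c => g⁻¹ * (m * c)) = fun c => α y * c := by
          funext c; rw [← mul_assoc, hm']
        rw [this]

theorem auxA_lr (hcenter : CenterEqF F H) (hdim : Module.finrank F H = 4)
    {α : H → H} (hbij : Function.Bijective α) (hadd : ∀ x y, α (x + y) = α x + α y)
    (σ : F ≃+* F) (hσ : ∀ (a : F) (x : H), α (a • x) = σ a • α x) (h1 : α 1 = 1)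
    (L L' : Line F H) (hL : (1 : H) ∈ L.1) (hL' : (L'.1 : Set H) = α '' (L.1 : Set H))
    (h : imageLines F H α (leftClass F H L) = rightClass F H L') :
    ∀ y : H, y ≠ 0 →
      α '' ((fun m => y * m) '' (L.1 : Set H)) = (fun c => c * α y) '' (L'.1 : Set H) := by
  intro y hy
  obtain ⟨t, htL, hts, hLspan⟩ := aux_line_basis L.2 hL
  have hα0 : α 0 = 0 := aux_alpha_zero hadd
  have hinj := hbij.1
  have hαy0 : α y ≠ 0 := fun h0 => hy (hinj (h0.trans hα0.symm))
  have h1L' : (1:H) ∈ L'.1 := by rw [← SetLike.mem_coe, hL']; exact ⟨1, hL, h1⟩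
  set N : Submodule F H := L.1.map (mulLeftEquiv (F := F) y hy).toLinearMap with hN
  have hNset : (N : Set H) = (fun m => y * m) '' (L.1 : Set H) := by
    rw [hN, Submodule.map_coe]; rfl
  have hNrank : Module.finrank F ↥N = 2 := by
    rw [hN, LinearEquiv.finrank_map_eq]; exact L.2
  have hNspan : N = Submodule.span F ({y, y * t} : Set H) := by
    rw [hN, hLspan, Submodule.map_span]
    congr 1
    rw [Set.image_pair]
    simp
  have hyt : α (y * t) ∉ Submodule.span F ({α y} : Set H) := by
    intro hmem
    rw [Submodule.mem_span_singleton] at hmem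
    obtain ⟨c, hc⟩ := hmem
    apply hts
    have he1 : α (y * t) = α (σ.symm c • y) := by rw [hσ, σ.apply_symm_apply, ← hc]
    have he2 : y * t = y * (σ.symm c • 1) := by
      rw [mul_smul_comm, mul_one]; exact hinj he1
    have he3 := mul_left_cancel₀ hy he2
    rw [Submodule.mem_span_singleton]
    exact ⟨σ.symm c, he3.symm⟩
  set N' : Submodule F H := Submodule.span F ({α y, α (y * t)} : Set H) with hN'
  have hN'set : (N' : Set H) = α '' (N : Set H) := by
    rw [hN', hNspan, aux_image_span_pair hadd σ hσ]
  have hN'rank : Module.finrank F ↥N' = 2 := aux_finrank_span_pair hαy0 hyt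
  have hclass : (⟨N, hNrank⟩ : Line F H) ∈ leftClass F H L := by
    refine ⟨y⁻¹, inv_ne_zero hy, ?_⟩
    rw [hNset, Set.image_image]
    have : (fun x => y⁻¹ * (y * x)) = fun x : H => x := by
      funext x; rw [← mul_assoc, inv_mul_cancel₀ hy, one_mul]
    rw [this, Set.image_id']
  have hmem : (⟨N', hN'rank⟩ : Line F H) ∈ rightClass F H L' := by
    rw [← h]
    exact ⟨⟨N, hNrank⟩, hclass, hN'set⟩
  obtain ⟨g, hg0, hgeq⟩ := hmem
  have hNg : (N' : Set H) = (fun c => c * g⁻¹) '' (L'.1 : Set H) := by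
    rw [hgeq, Set.image_image]
    have : (fun x => x * g * g⁻¹) = fun x : H => x := by
      funext x; rw [mul_assoc, mul_inv_cancel₀ hg0, mul_one]
    rw [this, Set.image_id']
  have hαyN' : α y ∈ (N' : Set H) := by
    rw [hN'set, hNset]
    exact ⟨y, ⟨1, hL, mul_one y⟩, rfl⟩
  obtain ⟨m, hmL', hm⟩ := hNg ▸ hαyN'
  have hm' : m * g⁻¹ = α y := hm
  have hm0 : m ≠ 0 := by rintro rfl; rw [zero_mul] at hm'; exact hαy0 hm'.symm
  calc α '' ((fun m => y * m) '' (L.1 : Set H)) = (N' : Set H) := by rw [hN'set, hNset]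
    _ = (fun c => c * g⁻¹) '' (L'.1 : Set H) := hNg
    _ = (fun c => c * g⁻¹) '' ((fun c => c * m) '' (L'.1 : Set H)) := by
        rw [aux_line_smul_right hcenter hdim L'.2 h1L' m hmL' hm0]
    _ = (fun c => c * α y) '' (L'.1 : Set H) := by
        rw [Set.image_image]
        have : (fun c => c * m * g⁻¹) = fun c => c * α y := by
          funext c; rw [mul_assoc, hm']
        rw [this]

theorem auxA_rl (hcenter : CenterEqF F H) (hdim : Module.finrank F H = 4)
    {α : H → H} (hbij : Function.Bijective α) (hadd : ∀ x y, α (x + y) = α x + α y)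
    (σ : F ≃+* F) (hσ : ∀ (a : F) (x : H), α (a • x) = σ a • α x) (h1 : α 1 = 1)
    (L L' : Line F H) (hL : (1 : H) ∈ L.1) (hL' : (L'.1 : Set H) = α '' (L.1 : Set H))
    (h : imageLines F H α (rightClass F H L) = leftClass F H L') :
    ∀ y : H, y ≠ 0 →
      α '' ((fun m => m * y) '' (L.1 : Set H)) = (fun c => α y * c) '' (L'.1 : Set H) := by
  intro y hy
  obtain ⟨t, htL, hts, hLspan⟩ := aux_line_basis L.2 hL
  have hα0 : α 0 = 0 := aux_alpha_zero hadd
  have hinj := hbij.1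
  have hαy0 : α y ≠ 0 := fun h0 => hy (hinj (h0.trans hα0.symm))
  have h1L' : (1:H) ∈ L'.1 := by rw [← SetLike.mem_coe, hL']; exact ⟨1, hL, h1⟩
  set N : Submodule F H := L.1.map (mulRightEquiv (F := F) y hy).toLinearMap with hN
  have hNset : (N : Set H) = (fun m => m * y) '' (L.1 : Set H) := by
    rw [hN, Submodule.map_coe]; rfl
  have hNrank : Module.finrank F ↥N = 2 := by
    rw [hN, LinearEquiv.finrank_map_eq]; exact L.2
  have hNspan : N = Submodule.span F ({y, t * y} : Set H) := by
    rw [hN, hLspan, Submodule.map_span]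
    congr 1
    rw [Set.image_pair]
    simp
  have hyt : α (t * y) ∉ Submodule.span F ({α y} : Set H) := by
    intro hmem
    rw [Submodule.mem_span_singleton] at hmem
    obtain ⟨c, hc⟩ := hmem
    apply hts
    have he1 : α (t * y) = α (σ.symm c • y) := by rw [hσ, σ.apply_symm_apply, ← hc]
    have he2 : t * y = (σ.symm c • (1:H)) * y := by
      rw [smul_mul_assoc, one_mul]; exact hinj he1
    have he3 := mul_right_cancel₀ hy he2
    rw [Submodule.mem_span_singleton]
    exact ⟨σ.symm c, he3.symm⟩
  set N' : Submodule F H := Submodule.span F ({α y, α (t * y)} : Set H) with hN'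
  have hN'set : (N' : Set H) = α '' (N : Set H) := by
    rw [hN', hNspan, aux_image_span_pair hadd σ hσ]
  have hN'rank : Module.finrank F ↥N' = 2 := aux_finrank_span_pair hαy0 hyt
  have hclass : (⟨N, hNrank⟩ : Line F H) ∈ rightClass F H L := by
    refine ⟨y⁻¹, inv_ne_zero hy, ?_⟩
    rw [hNset, Set.image_image]
    have : (fun x => x * y * y⁻¹) = fun x : H => x := by
      funext x; rw [mul_assoc, mul_inv_cancel₀ hy, mul_one]
    rw [this, Set.image_id']
  have hmem : (⟨N', hN'rank⟩ : Line F H) ∈ leftClass F H L' := by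
    rw [← h]
    exact ⟨⟨N, hNrank⟩, hclass, hN'set⟩
  obtain ⟨g, hg0, hgeq⟩ := hmem
  have hNg : (N' : Set H) = (fun c => g⁻¹ * c) '' (L'.1 : Set H) := by
    rw [hgeq, Set.image_image]
    have : (fun x => g⁻¹ * (g * x)) = fun x : H => x := by
      funext x; rw [← mul_assoc, inv_mul_cancel₀ hg0, one_mul]
    rw [this, Set.image_id']
  have hαyN' : α y ∈ (N' : Set H) := by
    rw [hN'set, hNset]
    exact ⟨y, ⟨1, hL, one_mul y⟩, rfl⟩
  obtain ⟨m, hmL', hm⟩ := hNg ▸ hαyN'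
  have hm' : g⁻¹ * m = α y := hm
  have hm0 : m ≠ 0 := by rintro rfl; rw [mul_zero] at hm'; exact hαy0 hm'.symm
  calc α '' ((fun m => m * y) '' (L.1 : Set H)) = (N' : Set H) := by rw [hN'set, hNset]
    _ = (fun c => g⁻¹ * c) '' (L'.1 : Set H) := hNg
    _ = (fun c => g⁻¹ * c) '' ((fun c => m * c) '' (L'.1 : Set H)) := by
        rw [aux_line_smul_left hcenter hdim L'.2 h1L' m hmL' hm0]
    _ = (fun c => α y * c) '' (L'.1 : Set H) := by
        rw [Set.image_image]
        have : (fun c => g⁻¹ * (m * c)) = fun c => α y * c := by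
          funext c; rw [← mul_assoc, hm']
        rw [this]

theorem auxA_rr (hcenter : CenterEqF F H) (hdim : Module.finrank F H = 4)
    {α : H → H} (hbij : Function.Bijective α) (hadd : ∀ x y, α (x + y) = α x + α y)
    (σ : F ≃+* F) (hσ : ∀ (a : F) (x : H), α (a • x) = σ a • α x) (h1 : α 1 = 1)
    (L L' : Line F H) (hL : (1 : H) ∈ L.1) (hL' : (L'.1 : Set H) = α '' (L.1 : Set H))
    (h : imageLines F H α (rightClass F H L) = rightClass F H L') :
    ∀ y : H, y ≠ 0 →
      α '' ((fun m => m * y) '' (L.1 : Set H)) = (fun c => c * α y) '' (L'.1 : Set H) := by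
  intro y hy
  obtain ⟨t, htL, hts, hLspan⟩ := aux_line_basis L.2 hL
  have hα0 : α 0 = 0 := aux_alpha_zero hadd
  have hinj := hbij.1
  have hαy0 : α y ≠ 0 := fun h0 => hy (hinj (h0.trans hα0.symm))
  have h1L' : (1:H) ∈ L'.1 := by rw [← SetLike.mem_coe, hL']; exact ⟨1, hL, h1⟩
  set N : Submodule F H := L.1.map (mulRightEquiv (F := F) y hy).toLinearMap with hN
  have hNset : (N : Set H) = (fun m => m * y) '' (L.1 : Set H) := by
    rw [hN, Submodule.map_coe]; rfl
  have hNrank : Module.finrank F ↥N = 2 := by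
    rw [hN, LinearEquiv.finrank_map_eq]; exact L.2
  have hNspan : N = Submodule.span F ({y, t * y} : Set H) := by
    rw [hN, hLspan, Submodule.map_span]
    congr 1
    rw [Set.image_pair]
    simp
  have hyt : α (t * y) ∉ Submodule.span F ({α y} : Set H) := by
    intro hmem
    rw [Submodule.mem_span_singleton] at hmem
    obtain ⟨c, hc⟩ := hmem
    apply hts
    have he1 : α (t * y) = α (σ.symm c • y) := by rw [hσ, σ.apply_symm_apply, ← hc]
    have he2 : t * y = (σ.symm c • (1:H)) * y := by
      rw [smul_mul_assoc, one_mul]; exact hinj he1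
    have he3 := mul_right_cancel₀ hy he2
    rw [Submodule.mem_span_singleton]
    exact ⟨σ.symm c, he3.symm⟩
  set N' : Submodule F H := Submodule.span F ({α y, α (t * y)} : Set H) with hN'
  have hN'set : (N' : Set H) = α '' (N : Set H) := by
    rw [hN', hNspan, aux_image_span_pair hadd σ hσ]
  have hN'rank : Module.finrank F ↥N' = 2 := aux_finrank_span_pair hαy0 hyt
  have hclass : (⟨N, hNrank⟩ : Line F H) ∈ rightClass F H L := by
    refine ⟨y⁻¹, inv_ne_zero hy, ?_⟩
    rw [hNset, Set.image_image]
    have : (fun x => x * y * y⁻¹) = fun x : H => x := by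
      funext x; rw [mul_assoc, mul_inv_cancel₀ hy, mul_one]
    rw [this, Set.image_id']
  have hmem : (⟨N', hN'rank⟩ : Line F H) ∈ rightClass F H L' := by
    rw [← h]
    exact ⟨⟨N, hNrank⟩, hclass, hN'set⟩
  obtain ⟨g, hg0, hgeq⟩ := hmem
  have hNg : (N' : Set H) = (fun c => c * g⁻¹) '' (L'.1 : Set H) := by
    rw [hgeq, Set.image_image]
    have : (fun x => x * g * g⁻¹) = fun x : H => x := by
      funext x; rw [mul_assoc, mul_inv_cancel₀ hg0, mul_one]
    rw [this, Set.image_id']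
  have hαyN' : α y ∈ (N' : Set H) := by
    rw [hN'set, hNset]
    exact ⟨y, ⟨1, hL, one_mul y⟩, rfl⟩
  obtain ⟨m, hmL', hm⟩ := hNg ▸ hαyN'
  have hm' : m * g⁻¹ = α y := hm
  have hm0 : m ≠ 0 := by rintro rfl; rw [zero_mul] at hm'; exact hαy0 hm'.symm
  calc α '' ((fun m => m * y) '' (L.1 : Set H)) = (N' : Set H) := by rw [hN'set, hNset]
    _ = (fun c => c * g⁻¹) '' (L'.1 : Set H) := hNg
    _ = (fun c => c * g⁻¹) '' ((fun c => c * m) '' (L'.1 : Set H)) := by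
        rw [aux_line_smul_right hcenter hdim L'.2 h1L' m hmL' hm0]
    _ = (fun c => c * α y) '' (L'.1 : Set H) := by
        rw [Set.image_image]
        have : (fun c => c * m * g⁻¹) = fun c => c * α y := by
          funext c; rw [mul_assoc, hm']
        rw [this]

theorem auxB_mul (hcenter : CenterEqF F H) (hdim : Module.finrank F H = 4)
    {α : H → H} (hbij : Function.Bijective α) (hadd : ∀ x y, α (x + y) = α x + α y)
    (h1 : α 1 = 1)
    (L L' : Line F H) (hL : (1 : H) ∈ L.1) (hL' : (L'.1 : Set H) = α '' (L.1 : Set H))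
    (s : H → H → H)
    (hs_add : ∀ x y z, s (x + y) z = s x z + s y z)
    (hs_one : ∀ z, s 1 z = z)
    (hs_zero : ∀ x, s x 0 = 0)
    (hs_neg : ∀ y, s y (-1 : H) = -y)
    (hs_sub : ∀ y : H, y ≠ 0 → ∃ Nsub : Submodule F H,
        (Nsub : Set H) = (fun m => s y m) '' (L.1 : Set H) ∧ Nsub ≠ ⊤)
    (key : ∀ y : H, y ≠ 0 →
        α '' ((fun m => s y m) '' (L.1 : Set H)) = (fun c => α y * c) '' (L'.1 : Set H)) :
    ∀ x : H, ∀ z ∈ L.1, α (s x z) = α x * α z := by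
  have hα0 : α 0 = 0 := aux_alpha_zero hadd
  have hinj := hbij.1
  have hα_ne : ∀ {x : H}, x ≠ 0 → α x ≠ 0 := fun hx h0 => hx (hinj (h0.trans hα0.symm))
  have h1L' : (1 : H) ∈ L'.1 := by rw [← SetLike.mem_coe, hL']; exact ⟨1, hL, h1⟩
  intro x z hz
  rcases eq_or_ne z 0 with rfl | hz0
  · rw [hs_zero, hα0, mul_zero]
  rcases eq_or_ne x 0 with rfl | hx0
  · have hs0 : s 0 z = 0 := by
      have h' := hs_add 0 0 z
      rw [add_zero] at h'
      exact (left_eq_add.mp h')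
    rw [hs0, hα0, zero_mul]
  have hαz : α z ∈ L'.1 := by rw [← SetLike.mem_coe, hL']; exact ⟨z, hz, rfl⟩
  have hc : ∀ y : H, y ≠ 0 → ∃ c, c ∈ L'.1 ∧ α (s y z) = α y * c := by
    intro y hy
    have hmem : α (s y z) ∈ (fun c => α y * c) '' (L'.1 : Set H) := by
      rw [← key y hy]; exact ⟨s y z, ⟨z, hz, rfl⟩, rfl⟩
    obtain ⟨c, hcL, hce⟩ := hmem
    exact ⟨c, hcL, hce.symm⟩
  have hC : ∀ x' y' : H, x' ≠ 0 → y' ≠ 0 →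
      x' ∉ (fun m => s y' m) '' (L.1 : Set H) →
      ∀ cx, cx ∈ L'.1 → ∀ cy, cy ∈ L'.1 →
        α (s x' z) = α x' * cx → α (s y' z) = α y' * cy → cx = cy := by
    intro x' y' hx' hy' hnm cx hcx cy hcy ex ey
    have hne : x' + y' ≠ 0 := by
      intro h0
      apply hnm
      refine ⟨-1, L.1.neg_mem hL, ?_⟩
      show s y' (-1) = x'
      rw [hs_neg]
      exact (eq_neg_of_add_eq_zero_left h0).symm
    obtain ⟨cs, hcs, es⟩ := hc (x' + y') hne
    have eq1 : α x' * cs + α y' * cs = α x' * cx + α y' * cy := by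
      have h' : α (s (x' + y') z) = α (s x' z) + α (s y' z) := by rw [hs_add, hadd]
      rw [es, ex, ey, hadd, add_mul] at h'
      exact h'
    have main : α x' * (cs - cx) = α y' * (cy - cs) := by
      rw [mul_sub, mul_sub, sub_eq_sub_iff_add_eq_add, eq1, add_comm]
    by_cases hcsx : cs = cx
    · rw [hcsx, sub_self, mul_zero] at main
      have h0' : cy - cx = 0 := by
        rcases mul_eq_zero.mp main.symm with h' | h'
        · exact absurd h' (hα_ne hy')
        · exact h'
      exact (sub_eq_zero.mp h0').symm
    · exfalso
      apply hnm
      have hd0 : cs - cx ≠ 0 := sub_ne_zero.mpr hcsx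
      have hdinv : (cs - cx)⁻¹ ∈ L'.1 :=
        aux_line_inv hcenter hdim L'.2 h1L' _ (L'.1.sub_mem hcs hcx) hd0
      have hdL : (cy - cs) * (cs - cx)⁻¹ ∈ L'.1 :=
        aux_line_mul_mem hcenter hdim L'.2 h1L' _ (L'.1.sub_mem hcy hcs) _ hdinv
      have hxd : α x' = α y' * ((cy - cs) * (cs - cx)⁻¹) := by
        rw [← mul_assoc, ← main, mul_assoc, mul_inv_cancel₀ hd0, mul_one]
      have hmem : α x' ∈ (fun c => α y' * c) '' (L'.1 : Set H) :=
        ⟨(cy - cs) * (cs - cx)⁻¹, hdL, hxd.symm⟩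
      rw [← key y' hy'] at hmem
      obtain ⟨w, hw, hwe⟩ := hmem
      exact (hinj hwe) ▸ hw
  have hCC : ∀ x', x' ≠ 0 → ∀ cx, cx ∈ L'.1 → α (s x' z) = α x' * cx → cx = α z := by
    intro x' hx' cx hcx ex
    have hs1 : (fun m => s 1 m) '' (L.1 : Set H) = (L.1 : Set H) := by
      have h' : (fun m => s (1:H) m) = fun m : H => m := funext hs_one
      rw [h', Set.image_id']
    obtain ⟨Nx, hNxeq, hNxne⟩ := hs_sub x' hx'
    have hLne : L.1 ≠ ⊤ := by
      intro h'
      have h2 := L.2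
      rw [h', finrank_top, hdim] at h2
      norm_num at h2
    obtain ⟨w, hwN, hwL⟩ := aux_exists_notmem hNxne hLne
    have hw0 : w ≠ 0 := fun h0 => hwN (h0 ▸ Nx.zero_mem)
    obtain ⟨cw, hcw, ew⟩ := hc w hw0
    have hwx : w ∉ (fun m => s x' m) '' (L.1 : Set H) := by
      intro hm
      exact hwN (by rw [← SetLike.mem_coe, hNxeq]; exact hm)
    have h1' : cw = cx := hC w x' hw0 hx' hwx cw hcw cx hcx ew ex
    have h2' : cw = α z := by
      refine hC w 1 hw0 one_ne_zero ?_ cw hcw (α z) hαz ew ?_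
      · rw [hs1]; exact hwL
      · rw [hs_one, h1, one_mul]
    exact h1' ▸ h2'
  obtain ⟨c, hcL, hce⟩ := hc x hx0
  rw [hce, hCC x hx0 c hcL hce]

theorem auxB_flip (hcenter : CenterEqF F H) (hdim : Module.finrank F H = 4)
    {α : H → H} (hbij : Function.Bijective α) (hadd : ∀ x y, α (x + y) = α x + α y)
    (h1 : α 1 = 1)
    (L L' : Line F H) (hL : (1 : H) ∈ L.1) (hL' : (L'.1 : Set H) = α '' (L.1 : Set H))
    (s : H → H → H)
    (hs_add : ∀ x y z, s (x + y) z = s x z + s y z)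
    (hs_one : ∀ z, s 1 z = z)
    (hs_zero : ∀ x, s x 0 = 0)
    (hs_neg : ∀ y, s y (-1 : H) = -y)
    (hs_sub : ∀ y : H, y ≠ 0 → ∃ Nsub : Submodule F H,
        (Nsub : Set H) = (fun m => s y m) '' (L.1 : Set H) ∧ Nsub ≠ ⊤)
    (key : ∀ y : H, y ≠ 0 →
        α '' ((fun m => s y m) '' (L.1 : Set H)) = (fun c => c * α y) '' (L'.1 : Set H)) :
    ∀ x : H, ∀ z ∈ L.1, α (s x z) = α z * α x := by
  have hα0 : α 0 = 0 := aux_alpha_zero hadd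
  have hinj := hbij.1
  have hα_ne : ∀ {x : H}, x ≠ 0 → α x ≠ 0 := fun hx h0 => hx (hinj (h0.trans hα0.symm))
  have h1L' : (1 : H) ∈ L'.1 := by rw [← SetLike.mem_coe, hL']; exact ⟨1, hL, h1⟩
  intro x z hz
  rcases eq_or_ne z 0 with rfl | hz0
  · rw [hs_zero, hα0, zero_mul]
  rcases eq_or_ne x 0 with rfl | hx0
  · have hs0 : s 0 z = 0 := by
      have h' := hs_add 0 0 z
      rw [add_zero] at h'
      exact (left_eq_add.mp h')
    rw [hs0, hα0, mul_zero]
  have hαz : α z ∈ L'.1 := by rw [← SetLike.mem_coe, hL']; exact ⟨z, hz, rfl⟩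
  have hc : ∀ y : H, y ≠ 0 → ∃ c, c ∈ L'.1 ∧ α (s y z) = c * α y := by
    intro y hy
    have hmem : α (s y z) ∈ (fun c => c * α y) '' (L'.1 : Set H) := by
      rw [← key y hy]; exact ⟨s y z, ⟨z, hz, rfl⟩, rfl⟩
    obtain ⟨c, hcL, hce⟩ := hmem
    exact ⟨c, hcL, hce.symm⟩
  have hC : ∀ x' y' : H, x' ≠ 0 → y' ≠ 0 →
      x' ∉ (fun m => s y' m) '' (L.1 : Set H) →
      ∀ cx, cx ∈ L'.1 → ∀ cy, cy ∈ L'.1 →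
        α (s x' z) = cx * α x' → α (s y' z) = cy * α y' → cx = cy := by
    intro x' y' hx' hy' hnm cx hcx cy hcy ex ey
    have hne : x' + y' ≠ 0 := by
      intro h0
      apply hnm
      refine ⟨-1, L.1.neg_mem hL, ?_⟩
      show s y' (-1) = x'
      rw [hs_neg]
      exact (eq_neg_of_add_eq_zero_left h0).symm
    obtain ⟨cs, hcs, es⟩ := hc (x' + y') hne
    have eq1 : cs * α x' + cs * α y' = cx * α x' + cy * α y' := by
      have h' : α (s (x' + y') z) = α (s x' z) + α (s y' z) := by rw [hs_add, hadd]
      rw [es, ex, ey, hadd, mul_add] at h'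
      exact h'
    have main : (cs - cx) * α x' = (cy - cs) * α y' := by
      rw [sub_mul, sub_mul, sub_eq_sub_iff_add_eq_add, eq1, add_comm]
    by_cases hcsx : cs = cx
    · rw [hcsx, sub_self, zero_mul] at main
      have h0' : cy - cx = 0 := by
        rcases mul_eq_zero.mp main.symm with h' | h'
        · exact h'
        · exact absurd h' (hα_ne hy')
      exact (sub_eq_zero.mp h0').symm
    · exfalso
      apply hnm
      have hd0 : cs - cx ≠ 0 := sub_ne_zero.mpr hcsx
      have hdinv : (cs - cx)⁻¹ ∈ L'.1 :=
        aux_line_inv hcenter hdim L'.2 h1L' _ (L'.1.sub_mem hcs hcx) hd0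
      have hdL : (cs - cx)⁻¹ * (cy - cs) ∈ L'.1 :=
        aux_line_mul_mem hcenter hdim L'.2 h1L' _ hdinv _ (L'.1.sub_mem hcy hcs)
      have hxd : α x' = ((cs - cx)⁻¹ * (cy - cs)) * α y' := by
        rw [mul_assoc, ← main, ← mul_assoc, inv_mul_cancel₀ hd0, one_mul]
      have hmem : α x' ∈ (fun c => c * α y') '' (L'.1 : Set H) :=
        ⟨(cs - cx)⁻¹ * (cy - cs), hdL, hxd.symm⟩
      rw [← key y' hy'] at hmem
      obtain ⟨w, hw, hwe⟩ := hmem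
      exact (hinj hwe) ▸ hw
  have hCC : ∀ x', x' ≠ 0 → ∀ cx, cx ∈ L'.1 → α (s x' z) = cx * α x' → cx = α z := by
    intro x' hx' cx hcx ex
    have hs1 : (fun m => s 1 m) '' (L.1 : Set H) = (L.1 : Set H) := by
      have h' : (fun m => s (1:H) m) = fun m : H => m := funext hs_one
      rw [h', Set.image_id']
    obtain ⟨Nx, hNxeq, hNxne⟩ := hs_sub x' hx'
    have hLne : L.1 ≠ ⊤ := by
      intro h'
      have h2 := L.2
      rw [h', finrank_top, hdim] at h2
      norm_num at h2
    obtain ⟨w, hwN, hwL⟩ := aux_exists_notmem hNxne hLne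
    have hw0 : w ≠ 0 := fun h0 => hwN (h0 ▸ Nx.zero_mem)
    obtain ⟨cw, hcw, ew⟩ := hc w hw0
    have hwx : w ∉ (fun m => s x' m) '' (L.1 : Set H) := by
      intro hm
      exact hwN (by rw [← SetLike.mem_coe, hNxeq]; exact hm)
    have h1' : cw = cx := hC w x' hw0 hx' hwx cw hcw cx hcx ew ex
    have h2' : cw = α z := by
      refine hC w 1 hw0 one_ne_zero ?_ cw hcw (α z) hαz ew ?_
      · rw [hs1]; exact hwL
      · rw [hs_one, h1, mul_one]
    exact h1' ▸ h2'
  obtain ⟨c, hcL, hce⟩ := hc x hx0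
  rw [hce, hCC x hx0 c hcL hce]

theorem aux_hs_sub_left (hdim : Module.finrank F H = 4) (L : Line F H) :
    ∀ y : H, y ≠ 0 → ∃ Nsub : Submodule F H,
      (Nsub : Set H) = (fun m => y * m) '' (L.1 : Set H) ∧ Nsub ≠ ⊤ := by
  intro y hy
  refine ⟨L.1.map (mulLeftEquiv (F := F) y hy).toLinearMap,
    by rw [Submodule.map_coe]; rfl, ?_⟩
  intro htop
  have h2 : Module.finrank F ↥(L.1.map (mulLeftEquiv (F := F) y hy).toLinearMap) = 2 := by
    rw [LinearEquiv.finrank_map_eq]; exact L.2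
  rw [htop, finrank_top, hdim] at h2
  norm_num at h2

theorem aux_hs_sub_right (hdim : Module.finrank F H = 4) (L : Line F H) :
    ∀ y : H, y ≠ 0 → ∃ Nsub : Submodule F H,
      (Nsub : Set H) = (fun m => m * y) '' (L.1 : Set H) ∧ Nsub ≠ ⊤ := by
  intro y hy
  refine ⟨L.1.map (mulRightEquiv (F := F) y hy).toLinearMap,
    by rw [Submodule.map_coe]; rfl, ?_⟩
  intro htop
  have h2 : Module.finrank F ↥(L.1.map (mulRightEquiv (F := F) y hy).toLinearMap) = 2 := by
    rw [LinearEquiv.finrank_map_eq]; exact L.2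
  rw [htop, finrank_top, hdim] at h2
  norm_num at h2

end MyAux


/-- Lemma on semilinear bijections fixing `1`: if `α` maps one of the parallel classes
`Sℓ(L)`, `Sr(L)` of a line `L ∈ 𝒜` onto one of the parallel classes of the image line
`α(L)`, then `α` is multiplicative resp. antimultiplicative with respect to `L`. -/
theorem semilinear_class_mul
    (hcenter : CenterEqF F H) (hdim : Module.finrank F H = 4)
    (α : H → H) (hα : IsSemilinear F H α) (h1 : α 1 = 1)
    (L : Line F H) (hL : (1 : H) ∈ L.1)
    (L' : Line F H) (hL' : (L'.1 : Set H) = α '' (L.1 : Set H)) :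
    (imageLines F H α (leftClass F H L) = leftClass F H L' →
      ∀ x : H, ∀ z ∈ L.1, α (x * z) = α x * α z) ∧
    (imageLines F H α (leftClass F H L) = rightClass F H L' →
      ∀ x : H, ∀ z ∈ L.1, α (x * z) = α z * α x) ∧
    (imageLines F H α (rightClass F H L) = leftClass F H L' →
      ∀ x : H, ∀ z ∈ L.1, α (z * x) = α x * α z) ∧
    (imageLines F H α (rightClass F H L) = rightClass F H L' →
      ∀ x : H, ∀ z ∈ L.1, α (z * x) = α z * α x) := by
  obtain ⟨hbij, hadd, σ, hσ⟩ := hα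
  refine ⟨?_, ?_, ?_, ?_⟩
  · intro h x z hz
    exact auxB_mul hcenter hdim hbij hadd h1 L L' hL hL' (fun a b => a * b)
      (fun a b c => add_mul a b c) one_mul mul_zero mul_neg_one
      (aux_hs_sub_left hdim L)
      (auxA_ll hcenter hdim hbij hadd σ hσ h1 L L' hL hL' h) x z hz
  · intro h x z hz
    exact auxB_flip hcenter hdim hbij hadd h1 L L' hL hL' (fun a b => a * b)
      (fun a b c => add_mul a b c) one_mul mul_zero mul_neg_one
      (aux_hs_sub_left hdim L)
      (auxA_lr hcenter hdim hbij hadd σ hσ h1 L L' hL hL' h) x z hz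
  · intro h x z hz
    exact auxB_mul hcenter hdim hbij hadd h1 L L' hL hL' (fun a b => b * a)
      (fun a b c => mul_add c a b) mul_one zero_mul neg_one_mul
      (aux_hs_sub_right hdim L)
      (auxA_rl hcenter hdim hbij hadd σ hσ h1 L L' hL hL' h) x z hz
  · intro h x z hz
    exact auxB_flip hcenter hdim hbij hadd h1 L L' hL hL' (fun a b => b * a)
      (fun a b c => mul_add c a b) mul_one zero_mul neg_one_mul
      (aux_hs_sub_right hdim L)
      (auxA_rr hcenter hdim hbij hadd σ hσ h1 L L' hL hL' h) x z hz
end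

section
/- Let ∥ be a Clifford-like parallelism and let α : H → H be a semilinear bijection that preserves ∥ and satisfies α(1) = 1. (i) If there exists a line L ∈ 𝒜 such that S(L) and S(α(L)) are of the same kind, i.e., S(L) = Sℓ(L) and S(α(L)) = Sℓ(α(L)), or S(L) = Sr(L) and S(α(L)) = Sr(α(L)), then α(ℱ) = ℱ. (ii) If there exists a line L ∈ 𝒜 such that S(L) and S(α(L)) are of different kind, i.e., S(L) = Sℓ(L) and S(α(L)) = Sr(α(L)), or S(L) = Sr(L) and S(α(L)) = Sℓ(α(L)), then α(ℱ) = 𝒜 \ ℱ. -/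
variable (F H : Type*) [Field F] [DivisionRing H] [Algebra F H]

section MyAux
open Module Submodule
variable {F H : Type*} [Field F] [DivisionRing H] [Algebra F H]



theorem myfd (hdim : Module.finrank F H = 4) : FiniteDimensional F H :=
  Module.finite_of_finrank_pos (by rw [hdim]; norm_num)

theorem span_pair_finrank {x y : H} (h : ∀ c d : F, c • x + d • y = 0 → c = 0 ∧ d = 0) :
    Module.finrank F (Submodule.span F ({x, y} : Set H)) = 2 := by
  have hy : y ≠ 0 := by
    intro h0
    have := (h 0 1 (by simp [h0])).2
    exact one_ne_zero this
  have hli : LinearIndependent F ![x, y] := by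
    rw [linearIndependent_fin2]
    refine ⟨by simpa using hy, fun a ha => ?_⟩
    simp only [Matrix.cons_val_one, Matrix.head_cons, Matrix.cons_val_zero] at ha
    have := (h 1 (-a) (by rw [one_smul, neg_smul, ← ha]; abel)).1
    exact one_ne_zero this
  have hr : Set.range ![x, y] = {x, y} := by
    ext z
    simp [Fin.exists_fin_two, or_comm]
  have := finrank_span_eq_card hli
  rw [hr] at this
  simpa using this

theorem indep_of_not_mem_span {u v : H} (hu0 : u ≠ 0)
    (hvu : v ∉ Submodule.span F ({u} : Set H)) :
    ∀ c d : F, c • u + d • v = 0 → c = 0 ∧ d = 0 := by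
  intro c d hcd
  by_cases hd : d = 0
  · subst hd
    rw [zero_smul, add_zero] at hcd
    rcases smul_eq_zero.mp hcd with h | h
    · exact ⟨h, rfl⟩
    · exact absurd h hu0
  · exfalso
    apply hvu
    rw [Submodule.mem_span_singleton]
    refine ⟨-(d⁻¹ * c), ?_⟩
    have hdv : d • v = -(c • u) := by
      rw [eq_neg_iff_add_eq_zero, add_comm]; exact hcd
    calc -(d⁻¹ * c) • u = d⁻¹ • -(c • u) := by rw [neg_smul, mul_smul, ← smul_neg]
      _ = d⁻¹ • (d • v) := by rw [← hdv]
      _ = v := by rw [smul_smul, inv_mul_cancel₀ hd, one_smul]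

theorem not_cover {A B : Submodule F H} (h : ∀ z : H, z ∈ A ∨ z ∈ B) :
    (∀ z : H, z ∈ A) ∨ (∀ z : H, z ∈ B) := by
  by_cases hA : ∀ z : H, z ∈ A
  · exact Or.inl hA
  right
  push_neg at hA
  obtain ⟨a, haA⟩ := hA
  have haB : a ∈ B := (h a).resolve_left haA
  intro z
  by_cases hzB : z ∈ B
  · exact hzB
  have hzA : z ∈ A := (h z).resolve_right hzB
  rcases h (z + a) with h' | h'
  · exact absurd (by simpa using A.sub_mem h' hzA) haA
  · simpa using B.sub_mem h' haB

theorem inv_mem_of (hdim : Module.finrank F H = 4) {D : Submodule F H} (h1D : (1 : H) ∈ D)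
    (hmul : ∀ x ∈ D, ∀ z ∈ D, x * z ∈ D) {d : H} (hd : d ∈ D) (hd0 : d ≠ 0) : d⁻¹ ∈ D := by
  haveI := myfd hdim
  let T := (LinearMap.mulLeft F d).restrict (p := D) (q := D) (fun x hx => hmul d hd x hx)
  have hinj : Function.Injective T := by
    intro a b hab
    have h' : d * (a : H) = d * (b : H) := congrArg Subtype.val hab
    exact Subtype.ext (mul_left_cancel₀ hd0 h')
  obtain ⟨w, hw⟩ := LinearMap.injective_iff_surjective.mp hinj ⟨1, h1D⟩
  have hw1 : d * (w : H) = 1 := congrArg Subtype.val hw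
  have : (w : H) = d⁻¹ := eq_inv_of_mul_eq_one_right hw1
  rw [← this]
  exact w.2








theorem sup_mulRight_finrank (hdim : Module.finrank F H = 4) {D : Submodule F H}
    (h1D : (1 : H) ∈ D) (hmul : ∀ x ∈ D, ∀ z ∈ D, x * z ∈ D) {h : H} (hh : h ∉ D) :
    Module.finrank F ↥(D ⊔ Submodule.map (LinearMap.mulRight F h) D)
      = 2 * Module.finrank F ↥D := by
  haveI := myfd hdim
  have hh0 : h ≠ 0 := fun h0 => hh (h0 ▸ D.zero_mem)
  have hinj : Function.Injective (LinearMap.mulRight F h) := by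
    intro a b hab
    simp only [LinearMap.mulRight_apply] at hab
    exact mul_right_cancel₀ hh0 hab
  have hmap : Module.finrank F ↥(Submodule.map (LinearMap.mulRight F h) D)
      = Module.finrank F ↥D :=
    (LinearEquiv.finrank_eq (Submodule.equivMapOfInjective _ hinj D)).symm
  have hinf : D ⊓ Submodule.map (LinearMap.mulRight F h) D = ⊥ := by
    rw [eq_bot_iff]
    intro z hz
    rw [Submodule.mem_inf] at hz
    obtain ⟨d, hdD, hdz⟩ := Submodule.mem_map.mp hz.2
    rw [LinearMap.mulRight_apply] at hdz
    rcases eq_or_ne d 0 with rfl | hd0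
    · rw [Submodule.mem_bot, ← hdz, zero_mul]
    · exfalso
      apply hh
      have hdinv : d⁻¹ ∈ D := inv_mem_of hdim h1D hmul hdD hd0
      have h2 : d⁻¹ * (d * h) ∈ D := hmul _ hdinv _ (by rw [hdz]; exact hz.1)
      rwa [inv_mul_cancel_left₀ hd0] at h2
  have hfr := Submodule.finrank_sup_add_finrank_inf_eq D (Submodule.map (LinearMap.mulRight F h) D)
  rw [hinf, hmap, finrank_bot, add_zero] at hfr
  omega

theorem comm_all_contra (hcenter : CenterEqF F H) {u : H}
    (hu : u ∉ Submodule.span F ({(1 : H)} : Set H)) (hall : ∀ z : H, z * u = u * z) : False := by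
  obtain ⟨a, ha⟩ := (hcenter u).mp (fun x => (hall x).symm)
  apply hu
  rw [ha, Algebra.algebraMap_eq_smul_one]
  exact Submodule.smul_mem _ _ (Submodule.mem_span_singleton_self 1)

theorem sq_mem (hcenter : CenterEqF F H) (hdim : Module.finrank F H = 4) (u : H) :
    u * u ∈ Submodule.span F ({1, u} : Set H) := by
  haveI := myfd hdim
  by_cases hu1 : u ∈ Submodule.span F ({(1 : H)} : Set H)
  · obtain ⟨c, hc⟩ := Submodule.mem_span_singleton.mp hu1
    have h2 : u * u = c • u := by rw [← hc, smul_mul_assoc, one_mul]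
    rw [h2]
    exact Submodule.smul_mem _ _ (Submodule.subset_span (by simp))
  by_contra hsq
  have hp2 : Module.finrank F (Submodule.span F ({1, u} : Set H)) = 2 :=
    span_pair_finrank (indep_of_not_mem_span one_ne_zero hu1)
  by_cases hcu : u * u * u ∈ Submodule.span F ({1, u, u * u} : Set H)
  · set D := Submodule.span F ({1, u, u * u} : Set H) with hD
    have h1D : (1 : H) ∈ D := Submodule.subset_span (by simp)
    have huD : u ∈ D := Submodule.subset_span (by simp)
    have hu2D : u * u ∈ D := Submodule.subset_span (by simp)
    have hrep : ∀ x ∈ D, ∃ a b c : F, x = a • (1 : H) + (b • u + c • (u * u)) := by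
      intro x hx
      rw [hD, Submodule.mem_span_insert] at hx
      obtain ⟨a, z, hz, rfl⟩ := hx
      obtain ⟨b, c, hbc⟩ := Submodule.mem_span_pair.mp hz
      exact ⟨a, b, c, by rw [hbc]⟩
    have hu3 : u * u * u ∈ D := hcu
    have hu4 : u * u * (u * u) ∈ D := by
      obtain ⟨a, b, c, habc⟩ := hrep _ hu3
      have h5 : u * u * (u * u) = u * u * u * u := by simp [mul_assoc]
      rw [h5, habc, add_mul, add_mul, smul_mul_assoc, smul_mul_assoc, smul_mul_assoc, one_mul]
      exact D.add_mem (D.smul_mem _ huD) (D.add_mem (D.smul_mem _ hu2D) (D.smul_mem _ hu3))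
    have humul : ∀ z ∈ D, u * z ∈ D := by
      intro z hz; obtain ⟨a, b, c, rfl⟩ := hrep _ hz
      rw [mul_add, mul_add, mul_smul_comm, mul_one, mul_smul_comm, mul_smul_comm, ← mul_assoc]
      exact D.add_mem (D.smul_mem _ huD) (D.add_mem (D.smul_mem _ hu2D) (D.smul_mem _ hu3))
    have hu2mul : ∀ z ∈ D, u * u * z ∈ D := by
      intro z hz; obtain ⟨a, b, c, rfl⟩ := hrep _ hz
      rw [mul_add, mul_add, mul_smul_comm, mul_one, mul_smul_comm, mul_smul_comm]
      exact D.add_mem (D.smul_mem _ hu2D) (D.add_mem (D.smul_mem _ hu3) (D.smul_mem _ hu4))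
    have hmulD : ∀ x ∈ D, ∀ z ∈ D, x * z ∈ D := by
      intro x hx z hz
      obtain ⟨a, b, c, rfl⟩ := hrep _ hx
      rw [add_mul, add_mul, smul_mul_assoc, one_mul, smul_mul_assoc, smul_mul_assoc]
      exact D.add_mem (D.smul_mem _ hz)
        (D.add_mem (D.smul_mem _ (humul _ hz)) (D.smul_mem _ (hu2mul _ hz)))
    by_cases hDtop : D = ⊤
    · apply comm_all_contra hcenter hu1
      intro z
      have hz : z ∈ D := hDtop ▸ Submodule.mem_top
      obtain ⟨a, b, c, rfl⟩ := hrep _ hz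
      simp only [add_mul, mul_add, smul_mul_assoc, mul_smul_comm, one_mul, mul_one, mul_assoc]
    · have hex : ∃ h : H, h ∉ D := by
        by_contra hc; push_neg at hc
        exact hDtop (Submodule.eq_top_iff'.mpr hc)
      obtain ⟨h, hh⟩ := hex
      have hd3 : 3 ≤ Module.finrank F ↥D := by
        have hlt : Submodule.span F ({1, u} : Set H) < D := by
          rw [SetLike.lt_iff_le_and_exists]
          refine ⟨Submodule.span_le.mpr ?_, ⟨u * u, hu2D, hsq⟩⟩
          intro z hz
          simp only [Set.mem_insert_iff, Set.mem_singleton_iff] at hz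
          rcases hz with rfl | rfl
          · exact h1D
          · exact huD
        have := Submodule.finrank_lt_finrank_of_lt hlt
        omega
      have hsup := sup_mulRight_finrank hdim h1D hmulD hh
      have hle := Submodule.finrank_le (D ⊔ Submodule.map (LinearMap.mulRight F h) D)
      rw [hdim] at hle
      omega
  · set S3 := Submodule.span F ({1, u, u * u} : Set H) with hS3
    set S4 := Submodule.span F ({1, u, u * u, u * u * u} : Set H) with hS4
    have hchain1 : Submodule.span F ({1, u} : Set H) < S3 := by
      rw [SetLike.lt_iff_le_and_exists]
      refine ⟨Submodule.span_mono ?_, ⟨u * u, Submodule.subset_span (by simp), hsq⟩⟩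
      intro z hz
      simp only [Set.mem_insert_iff, Set.mem_singleton_iff] at hz ⊢
      tauto
    have hchain2 : S3 < S4 := by
      rw [SetLike.lt_iff_le_and_exists]
      refine ⟨Submodule.span_mono ?_, ⟨u * u * u, Submodule.subset_span (by simp), hcu⟩⟩
      intro z hz
      simp only [Set.mem_insert_iff, Set.mem_singleton_iff] at hz ⊢
      tauto
    have h3 : 3 ≤ Module.finrank F ↥S3 := by
      have := Submodule.finrank_lt_finrank_of_lt hchain1; omega
    have h4 : 4 ≤ Module.finrank F ↥S4 := by
      have := Submodule.finrank_lt_finrank_of_lt hchain2; omega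
    have hle := Submodule.finrank_le S4
    rw [hdim] at hle
    have hS4top : S4 = ⊤ := Submodule.eq_top_of_finrank_eq (by rw [hdim]; omega)
    apply comm_all_contra hcenter hu1
    intro z
    have hz : z ∈ S4 := hS4top ▸ Submodule.mem_top
    rw [hS4, Submodule.mem_span_insert] at hz
    obtain ⟨a, z1, hz1, rfl⟩ := hz
    rw [Submodule.mem_span_insert] at hz1
    obtain ⟨b, z2, hz2, rfl⟩ := hz1
    obtain ⟨c, d, hcd⟩ := Submodule.mem_span_pair.mp hz2
    rw [← hcd]
    simp only [add_mul, mul_add, smul_mul_assoc, mul_smul_comm, one_mul, mul_one, mul_assoc]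

theorem cent (hcenter : CenterEqF F H) (hdim : Module.finrank F H = 4) {u : H}
    (hu : u ∉ Submodule.span F ({(1 : H)} : Set H)) {y : H}
    (hy : u * y = y * u) : y ∈ Submodule.span F ({1, u} : Set H) := by
  haveI := myfd hdim
  by_contra hyD
  set D := Submodule.span F ({1, u} : Set H) with hD
  have h1D : (1 : H) ∈ D := Submodule.subset_span (by simp)
  have huD : u ∈ D := Submodule.subset_span (by simp)
  have hp2 : Module.finrank F ↥D = 2 :=
    span_pair_finrank (indep_of_not_mem_span one_ne_zero hu)
  have hrep : ∀ x ∈ D, ∃ a b : F, a • (1 : H) + b • u = x := fun x hx =>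
    Submodule.mem_span_pair.mp hx
  have hsqD : u * u ∈ D := sq_mem hcenter hdim u
  have hmulu : ∀ x ∈ D, x * u ∈ D := by
    intro x hx
    obtain ⟨a, b, rfl⟩ := hrep _ hx
    rw [add_mul, smul_mul_assoc, one_mul, smul_mul_assoc]
    exact D.add_mem (D.smul_mem _ huD) (D.smul_mem _ hsqD)
  have hmulD : ∀ x ∈ D, ∀ z ∈ D, x * z ∈ D := by
    intro x hx z hz
    obtain ⟨c, d, rfl⟩ := hrep _ hz
    rw [mul_add, mul_smul_comm, mul_one, mul_smul_comm]
    exact D.add_mem (D.smul_mem _ hx) (D.smul_mem _ (hmulu _ hx))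
  have hsup := sup_mulRight_finrank hdim h1D hmulD hyD
  rw [hp2] at hsup
  have htop : D ⊔ Submodule.map (LinearMap.mulRight F y) D = ⊤ :=
    Submodule.eq_top_of_finrank_eq (by rw [hsup, hdim])
  apply comm_all_contra hcenter hu
  intro z
  have hz : z ∈ D ⊔ Submodule.map (LinearMap.mulRight F y) D := htop ▸ Submodule.mem_top
  obtain ⟨p, hp, q', hq', rfl⟩ := Submodule.mem_sup.mp hz
  obtain ⟨q, hq, rfl⟩ := Submodule.mem_map.mp hq'
  have hcommD : ∀ w ∈ D, w * u = u * w := by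
    intro w hw
    obtain ⟨a, b, rfl⟩ := hrep _ hw
    simp only [add_mul, mul_add, smul_mul_assoc, mul_smul_comm, one_mul, mul_one]
  rw [LinearMap.mulRight_apply, add_mul, mul_add, hcommD p hp]
  congr 1
  rw [mul_assoc, ← hy, ← mul_assoc, hcommD q hq, mul_assoc]


end MyAux

section Geo
open Module Submodule
variable {F H : Type*} [Field F] [DivisionRing H] [Algebra F H]

theorem line_not_span_one (hdim : Module.finrank F H = 4) (L : Line F H) :
    ∃ m ∈ L.1, m ∉ Submodule.span F ({(1 : H)} : Set H) := by
  haveI := myfd hdim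
  by_contra hc
  push_neg at hc
  have h1 := Submodule.finrank_mono (R := F) (show L.1 ≤ Submodule.span F ({(1:H)} : Set H) from hc)
  rw [L.2, finrank_span_singleton (one_ne_zero (α := H))] at h1
  omega

theorem line_eq_span_one (hdim : Module.finrank F H = 4) (L : Line F H) (h1L : (1:H) ∈ L.1)
    {x : H} (hx : x ∈ L.1) (hxs : x ∉ Submodule.span F ({(1:H)} : Set H)) :
    L.1 = Submodule.span F ({1, x} : Set H) := by
  haveI := myfd hdim
  have hle : Submodule.span F ({(1:H), x} : Set H) ≤ L.1 := by
    rw [Submodule.span_le]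
    intro z hz
    simp only [Set.mem_insert_iff, Set.mem_singleton_iff] at hz
    rcases hz with rfl | rfl
    exacts [h1L, hx]
  have h2 : Module.finrank F (Submodule.span F ({(1:H), x} : Set H)) = 2 :=
    span_pair_finrank (indep_of_not_mem_span one_ne_zero hxs)
  exact (Submodule.eq_of_le_of_finrank_le hle (le_of_eq (by rw [h2, L.2]))).symm

theorem line_span_pair (hdim : Module.finrank F H = 4) (L : Line F H) :
    ∃ u v : H, u ∈ L.1 ∧ v ∈ L.1 ∧ L.1 = Submodule.span F ({u, v} : Set H) ∧
      ∀ c d : F, c • u + d • v = 0 → c = 0 ∧ d = 0 := by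
  haveI := myfd hdim
  have hne : L.1 ≠ ⊥ := by
    intro hb
    have h2 := L.2
    rw [hb, finrank_bot] at h2
    exact absurd h2 (by norm_num)
  obtain ⟨u, huL, hu0⟩ := Submodule.ne_bot_iff _ |>.mp hne
  have hv : ∃ v ∈ L.1, v ∉ Submodule.span F ({u} : Set H) := by
    by_contra hc
    push_neg at hc
    have h1 := Submodule.finrank_mono (R := F) (show L.1 ≤ Submodule.span F ({u} : Set H) from hc)
    rw [L.2, finrank_span_singleton hu0] at h1
    omega
  obtain ⟨v, hvL, hvu⟩ := hv
  have hind := indep_of_not_mem_span (F := F) hu0 hvu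
  have h2 : Module.finrank F (Submodule.span F ({u, v} : Set H)) = 2 := span_pair_finrank hind
  have hle : Submodule.span F ({u, v} : Set H) ≤ L.1 := by
    rw [Submodule.span_le]; intro z hz
    simp only [Set.mem_insert_iff, Set.mem_singleton_iff] at hz
    rcases hz with rfl | rfl
    exacts [huL, hvL]
  exact ⟨u, v, huL, hvL,
    (Submodule.eq_of_le_of_finrank_le hle (le_of_eq (by rw [h2, L.2]))).symm, hind⟩

theorem line_mul_mem (hcenter : CenterEqF F H) (hdim : Module.finrank F H = 4)
    (L : Line F H) (h1L : (1:H) ∈ L.1) :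
    ∀ x ∈ L.1, ∀ y ∈ L.1, x * y ∈ L.1 := by
  intro x hx y hy
  by_cases hx1 : x ∈ Submodule.span F ({(1:H)} : Set H)
  · obtain ⟨c, hc⟩ := Submodule.mem_span_singleton.mp hx1
    rw [← hc, smul_mul_assoc, one_mul]
    exact L.1.smul_mem _ hy
  · have hsp := line_eq_span_one hdim L h1L hx hx1
    have hyx : y ∈ Submodule.span F ({(1:H), x} : Set H) := by rw [← hsp]; exact hy
    obtain ⟨a, b, hab⟩ := Submodule.mem_span_pair.mp hyx
    have hxx : x * x ∈ L.1 := by rw [hsp]; exact sq_mem hcenter hdim x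
    rw [← hab, mul_add, mul_smul_comm, mul_one, mul_smul_comm]
    exact L.1.add_mem (L.1.smul_mem _ hx) (L.1.smul_mem _ hxx)

theorem line_inv_mem (hcenter : CenterEqF F H) (hdim : Module.finrank F H = 4)
    (L : Line F H) (h1L : (1:H) ∈ L.1)
    {z : H} (hz : z ∈ L.1) (hz0 : z ≠ 0) : z⁻¹ ∈ L.1 :=
  inv_mem_of hdim h1L (line_mul_mem hcenter hdim L h1L) hz hz0

theorem lines_eq_of_common (hdim : Module.finrank F H = 4) (L M : Line F H)
    (h1L : (1:H) ∈ L.1) (h1M : (1:H) ∈ M.1)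
    {c : H} (hcL : c ∈ L.1) (hcM : c ∈ M.1)
    (hc1 : c ∉ Submodule.span F ({(1:H)} : Set H)) : L = M :=
  Subtype.ext (by
    rw [line_eq_span_one hdim L h1L hcL hc1, line_eq_span_one hdim M h1M hcM hc1])

theorem sl_zero {α : H → H} (hα : IsSemilinear F H α) : α 0 = 0 := by
  have h := hα.2.1 0 0
  rw [add_zero] at h
  exact (left_eq_add.mp h)

theorem sl_inj {α : H → H} (hα : IsSemilinear F H α) : Function.Injective α := hα.1.injective

theorem sl_ne_zero {α : H → H} (hα : IsSemilinear F H α) {x : H} (hx : x ≠ 0) : α x ≠ 0 :=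
  fun h0 => hx (sl_inj hα (by rw [h0, sl_zero hα]))

theorem sl_not_span_one {α : H → H} (hα : IsSemilinear F H α) (h1 : α 1 = 1)
    {x : H} (hx : x ∉ Submodule.span F ({(1:H)} : Set H)) :
    α x ∉ Submodule.span F ({(1:H)} : Set H) := by
  intro hmem
  apply hx
  obtain ⟨c, hc⟩ := Submodule.mem_span_singleton.mp hmem
  obtain ⟨hbij, hadd, σ, hsmul⟩ := id hα
  have h2 : α (σ.symm c • 1) = α x := by rw [hsmul, RingEquiv.apply_symm_apply, h1, hc]
  rw [Submodule.mem_span_singleton]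
  exact ⟨σ.symm c, sl_inj hα h2⟩

theorem inv_semilinear {α : H → H} (hα : IsSemilinear F H α) :
    ∃ β : H → H, IsSemilinear F H β ∧ (∀ x, α (β x) = x) ∧ (∀ x, β (α x) = x) := by
  obtain ⟨hbij, hadd, σ, hsmul⟩ := id hα
  obtain ⟨β, hβα, hαβ⟩ := Function.bijective_iff_has_inverse.mp hbij
  have hαβ' : ∀ x, α (β x) = x := hαβ
  have hβα' : ∀ x, β (α x) = x := hβα
  refine ⟨β, ⟨Function.bijective_iff_has_inverse.mpr ⟨α, hαβ, hβα⟩, ?_, σ.symm, ?_⟩, hαβ', hβα'⟩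
  · intro x y
    apply hbij.injective
    rw [hαβ' (x + y), hadd, hαβ', hαβ']
  · intro a x
    apply hbij.injective
    rw [hαβ', hsmul, RingEquiv.apply_symm_apply, hαβ']

theorem exists_image_line (hdim : Module.finrank F H = 4) {β : H → H}
    (hβ : IsSemilinear F H β) (L : Line F H) :
    ∃ L' : Line F H, (L'.1 : Set H) = β '' (L.1 : Set H) := by
  haveI := myfd hdim
  obtain ⟨hbij, hadd, σ, hsmul⟩ := id hβ
  have hz : β 0 = 0 := sl_zero hβ
  obtain ⟨u, v, huL, hvL, hspan, hind⟩ := line_span_pair hdim L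
  let p : Submodule F H :=
    { carrier := β '' (L.1 : Set H)
      add_mem' := by
        rintro a b ⟨x, hx, rfl⟩ ⟨y, hy, rfl⟩
        exact ⟨x + y, L.1.add_mem hx hy, hadd x y⟩
      zero_mem' := ⟨0, L.1.zero_mem, hz⟩
      smul_mem' := by
        rintro c a ⟨x, hx, rfl⟩
        exact ⟨σ.symm c • x, L.1.smul_mem _ hx, by rw [hsmul, RingEquiv.apply_symm_apply]⟩ }
  have hpspan : p = Submodule.span F ({β u, β v} : Set H) := by
    apply le_antisymm
    · rintro z ⟨x, hx, rfl⟩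
      have hx' : x ∈ Submodule.span F ({u, v} : Set H) := by rw [← hspan]; exact hx
      obtain ⟨c, d, hcd⟩ := Submodule.mem_span_pair.mp hx'
      rw [← hcd, hadd, hsmul, hsmul]
      exact Submodule.add_mem _
        (Submodule.smul_mem _ _ (Submodule.subset_span (by simp)))
        (Submodule.smul_mem _ _ (Submodule.subset_span (by simp)))
    · rw [Submodule.span_le]
      intro z hz'
      simp only [Set.mem_insert_iff, Set.mem_singleton_iff] at hz'
      rcases hz' with rfl | rfl
      · exact ⟨u, huL, rfl⟩
      · exact ⟨v, hvL, rfl⟩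
  have hfr : Module.finrank F ↥p = 2 := by
    rw [hpspan]
    apply span_pair_finrank
    intro c d hcd
    have h2 : β (σ.symm c • u + σ.symm d • v) = 0 := by
      rw [hadd, hsmul, hsmul, RingEquiv.apply_symm_apply, RingEquiv.apply_symm_apply, hcd]
    have h0 : σ.symm c • u + σ.symm d • v = 0 := hbij.injective (by rw [h2, hz])
    obtain ⟨h1', h2'⟩ := hind _ _ h0
    constructor
    · have hc' : c = σ (σ.symm c) := (σ.apply_symm_apply c).symm
      rw [hc', h1', map_zero]
    · have hd' : d = σ (σ.symm d) := (σ.apply_symm_apply d).symm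
      rw [hd', h2', map_zero]
  exact ⟨⟨p, hfr⟩, rfl⟩

theorem exists_lineL (hdim : Module.finrank F H = 4) {g : H} (hg : g ≠ 0) (L : Line F H) :
    ∃ N : Line F H, (N.1 : Set H) = (fun m => g * m) '' (L.1 : Set H) := by
  haveI := myfd hdim
  have hinj : Function.Injective (LinearMap.mulLeft F g) := by
    intro a b hab
    simp only [LinearMap.mulLeft_apply] at hab
    exact mul_left_cancel₀ hg hab
  refine ⟨⟨Submodule.map (LinearMap.mulLeft F g) L.1, ?_⟩, ?_⟩
  · rw [← LinearEquiv.finrank_eq (Submodule.equivMapOfInjective _ hinj L.1), L.2]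
  · rw [Submodule.map_coe]
    rfl

theorem exists_lineR (hdim : Module.finrank F H = 4) {g : H} (hg : g ≠ 0) (L : Line F H) :
    ∃ N : Line F H, (N.1 : Set H) = (fun m => m * g) '' (L.1 : Set H) := by
  haveI := myfd hdim
  have hinj : Function.Injective (LinearMap.mulRight F g) := by
    intro a b hab
    simp only [LinearMap.mulRight_apply] at hab
    exact mul_right_cancel₀ hg hab
  refine ⟨⟨Submodule.map (LinearMap.mulRight F g) L.1, ?_⟩, ?_⟩
  · rw [← LinearEquiv.finrank_eq (Submodule.equivMapOfInjective _ hinj L.1), L.2]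
  · rw [Submodule.map_coe]
    rfl

theorem lmul_lmul_cancel {g : H} (hg : g ≠ 0) (S : Set H) :
    (fun m => g⁻¹ * m) '' ((fun m => g * m) '' S) = S := by
  rw [Set.image_image]
  simp [inv_mul_cancel_left₀ hg]

theorem rmul_rmul_cancel {g : H} (hg : g ≠ 0) (S : Set H) :
    (fun m => m * g⁻¹) '' ((fun m => m * g) '' S) = S := by
  rw [Set.image_image]
  simp [mul_inv_cancel_right₀ hg]

theorem set_lmul_self (hcenter : CenterEqF F H) (hdim : Module.finrank F H = 4)
    (M : Line F H) (h1M : (1:H) ∈ M.1) {m₀ : H}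
    (hm : m₀ ∈ M.1) (h0 : m₀ ≠ 0) : (fun m => m₀ * m) '' (M.1 : Set H) = (M.1 : Set H) := by
  apply Set.Subset.antisymm
  · rintro _ ⟨x, hx, rfl⟩
    exact line_mul_mem hcenter hdim M h1M m₀ hm x hx
  · intro x hx
    refine ⟨m₀⁻¹ * x, ?_, by show m₀ * (m₀⁻¹ * x) = x; rw [mul_inv_cancel_left₀ h0]⟩
    exact line_mul_mem hcenter hdim M h1M _ (line_inv_mem hcenter hdim M h1M hm h0) x hx

theorem set_rmul_self (hcenter : CenterEqF F H) (hdim : Module.finrank F H = 4)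
    (M : Line F H) (h1M : (1:H) ∈ M.1) {m₀ : H}
    (hm : m₀ ∈ M.1) (h0 : m₀ ≠ 0) : (fun m => m * m₀) '' (M.1 : Set H) = (M.1 : Set H) := by
  apply Set.Subset.antisymm
  · rintro _ ⟨x, hx, rfl⟩
    exact line_mul_mem hcenter hdim M h1M x hx m₀ hm
  · intro x hx
    refine ⟨x * m₀⁻¹, ?_, by show (x * m₀⁻¹) * m₀ = x; rw [inv_mul_cancel_right₀ h0]⟩
    exact line_mul_mem hcenter hdim M h1M x hx _ (line_inv_mem hcenter hdim M h1M hm h0)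

theorem left_line_through (hcenter : CenterEqF F H) (hdim : Module.finrank F H = 4)
    (M : Line F H) (h1M : (1:H) ∈ M.1) (N : Line F H)
    (hN : N ∈ leftClass F H M) {x : H} (hx : x ∈ N.1) (hx0 : x ≠ 0) :
    (N.1 : Set H) = (fun m => x * m) '' (M.1 : Set H) := by
  obtain ⟨g, hg, hMg⟩ := hN
  have hNset : (N.1 : Set H) = (fun m => g⁻¹ * m) '' (M.1 : Set H) := by
    rw [hMg, lmul_lmul_cancel hg]
  have hx' : x ∈ (fun m => g⁻¹ * m) '' (M.1 : Set H) := by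
    rw [← hNset]; exact hx
  obtain ⟨m₀, hm₀, hxm⟩ := hx'
  simp only [] at hxm
  have hm₀0 : m₀ ≠ 0 := by
    rintro rfl
    rw [mul_zero] at hxm
    exact hx0 hxm.symm
  rw [hNset]
  calc (fun m => g⁻¹ * m) '' (M.1 : Set H)
      = (fun m => g⁻¹ * m) '' ((fun m => m₀ * m) '' (M.1 : Set H)) := by
        rw [set_lmul_self hcenter hdim M h1M hm₀ hm₀0]
    _ = (fun m => (g⁻¹ * m₀) * m) '' (M.1 : Set H) := by
        rw [Set.image_image]; simp [mul_assoc]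
    _ = (fun m => x * m) '' (M.1 : Set H) := by rw [hxm]

theorem right_line_through (hcenter : CenterEqF F H) (hdim : Module.finrank F H = 4)
    (M : Line F H) (h1M : (1:H) ∈ M.1) (N : Line F H)
    (hN : N ∈ rightClass F H M) {x : H} (hx : x ∈ N.1) (hx0 : x ≠ 0) :
    (N.1 : Set H) = (fun m => m * x) '' (M.1 : Set H) := by
  obtain ⟨g, hg, hMg⟩ := hN
  have hNset : (N.1 : Set H) = (fun m => m * g⁻¹) '' (M.1 : Set H) := by
    rw [hMg, rmul_rmul_cancel hg]
  have hx' : x ∈ (fun m => m * g⁻¹) '' (M.1 : Set H) := by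
    rw [← hNset]; exact hx
  obtain ⟨m₀, hm₀, hxm⟩ := hx'
  simp only [] at hxm
  have hm₀0 : m₀ ≠ 0 := by
    rintro rfl
    rw [zero_mul] at hxm
    exact hx0 hxm.symm
  rw [hNset]
  calc (fun m => m * g⁻¹) '' (M.1 : Set H)
      = (fun m => m * g⁻¹) '' ((fun m => m * m₀) '' (M.1 : Set H)) := by
        rw [set_rmul_self hcenter hdim M h1M hm₀ hm₀0]
    _ = (fun m => m * (m₀ * g⁻¹)) '' (M.1 : Set H) := by
        rw [Set.image_image]; simp [mul_assoc]
    _ = (fun m => m * x) '' (M.1 : Set H) := by rw [hxm]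

theorem left_ne_right (hcenter : CenterEqF F H) (hdim : Module.finrank F H = 4)
    (L : Line F H) (h1L : (1:H) ∈ L.1)
    (heq : leftClass F H L = rightClass F H L) : False := by
  haveI := myfd hdim
  obtain ⟨m, hmL, hm1⟩ := line_not_span_one hdim L
  have conj : ∀ g : H, g ≠ 0 →
      (fun m' => g * m') '' (L.1 : Set H) = (fun m' => m' * g) '' (L.1 : Set H) := by
    intro g hg
    obtain ⟨N, hNcar⟩ := exists_lineL hdim hg L
    have hNl : N ∈ leftClass F H L := by
      refine ⟨g⁻¹, inv_ne_zero hg, ?_⟩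
      rw [hNcar, lmul_lmul_cancel hg]
    rw [heq] at hNl
    obtain ⟨k, hk, hLk⟩ := hNl
    have hNset : (N.1 : Set H) = (fun m' => m' * k⁻¹) '' (L.1 : Set H) := by
      rw [hLk, rmul_rmul_cancel hk]
    have hgN : g ∈ (N.1 : Set H) := by
      rw [hNcar]
      exact ⟨1, h1L, by simp⟩
    rw [hNset] at hgN
    obtain ⟨m₀, hm₀, hgm⟩ := hgN
    simp only [] at hgm
    have hm₀0 : m₀ ≠ 0 := by
      rintro rfl
      rw [zero_mul] at hgm
      exact hg hgm.symm
    have hstep : (fun m' => m' * k⁻¹) '' (L.1 : Set H) = (fun m' => m' * g) '' (L.1 : Set H) := by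
      calc (fun m' => m' * k⁻¹) '' (L.1 : Set H)
          = (fun m' => m' * k⁻¹) '' ((fun m' => m' * m₀) '' (L.1 : Set H)) := by
            rw [set_rmul_self hcenter hdim L h1L hm₀ hm₀0]
        _ = (fun m' => m' * (m₀ * k⁻¹)) '' (L.1 : Set H) := by
            rw [Set.image_image]; simp [mul_assoc]
        _ = (fun m' => m' * g) '' (L.1 : Set H) := by rw [hgm]
    rw [← hNcar, hNset, hstep]
  have hall : ∀ x : H, x ∈ L.1 := by
    intro x
    by_contra hx
    have hx0 : x ≠ 0 := fun h0 => hx (h0 ▸ L.1.zero_mem)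
    have hx1 : (1 : H) + x ≠ 0 := by
      intro h0
      apply hx
      have hxe : x = -1 := eq_neg_of_add_eq_zero_right h0
      rw [hxe]
      exact L.1.neg_mem h1L
    have c1 := conj x hx0
    have c2 := conj (1 + x) hx1
    have hmem1 : m * (1 + x) ∈ (fun m' => (1 + x) * m') '' (L.1 : Set H) := by
      rw [c2]
      exact ⟨m, hmL, rfl⟩
    obtain ⟨m', hm', hmeq⟩ := hmem1
    simp only [] at hmeq
    have hmem2 : m * x ∈ (fun m' => x * m') '' (L.1 : Set H) := by
      rw [c1]
      exact ⟨m, hmL, rfl⟩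
    obtain ⟨m₂, hm₂, hmx⟩ := hmem2
    simp only [] at hmx
    have hsub : m - m' = x * (m' - m₂) := by
      have e0 : (1 + x) * m' = m * (1 + x) := hmeq
      rw [add_mul, one_mul, mul_add, mul_one] at e0
      rw [← hmx] at e0
      rw [mul_sub, sub_eq_sub_iff_add_eq_add]
      rw [← e0, add_comm]
    by_cases hmm : m' = m₂
    · have hmm' : m = m' := by
        have hz : m - m' = 0 := by rw [hsub, hmm, sub_self, mul_zero]
        exact sub_eq_zero.mp hz
      have hcomm : m * x = x * m := by
        rw [← hmx, ← hmm, ← hmm']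
      apply hx
      have hc := cent hcenter hdim hm1 hcomm
      rwa [← line_eq_span_one hdim L h1L hmL hm1] at hc
    · apply hx
      have hne : m' - m₂ ≠ 0 := sub_ne_zero.mpr hmm
      have hxval : x = (m - m') * (m' - m₂)⁻¹ := by
        rw [hsub, mul_assoc, mul_inv_cancel₀ hne, mul_one]
      rw [hxval]
      exact line_mul_mem hcenter hdim L h1L _ (L.1.sub_mem hmL hm') _
        (line_inv_mem hcenter hdim L h1L (L.1.sub_mem hm' hm₂) hne)
  have htop : L.1 = ⊤ := Submodule.eq_top_iff'.mpr hall
  have h2 := L.2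
  rw [htop, finrank_top] at h2
  rw [hdim] at h2
  norm_num at h2

end Geo


section Par
open Module Submodule
variable {F H : Type*} [Field F] [DivisionRing H] [Algebra F H]
variable {par : Line F H → Line F H → Prop} {α : H → H}

theorem one_mem_image {M M' : Line F H} (h1 : α 1 = 1)
    (hMcar : (M'.1 : Set H) = α '' (M.1 : Set H)) (h1M : (1:H) ∈ M.1) : (1:H) ∈ M'.1 := by
  have h : (1:H) ∈ (M'.1 : Set H) := by rw [hMcar]; exact ⟨1, h1M, h1⟩
  exact h

theorem img_lines_eq (L M L' M' : Line F H)
    (hLcar : (L'.1 : Set H) = α '' (L.1 : Set H))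
    (hMcar : (M'.1 : Set H) = α '' (M.1 : Set H)) (h : L = M) : L' = M' :=
  Subtype.ext (SetLike.ext' (by rw [hLcar, hMcar, h]))

theorem dom_lines_eq (hα : IsSemilinear F H α) (L M L' M' : Line F H)
    (hLcar : (L'.1 : Set H) = α '' (L.1 : Set H))
    (hMcar : (M'.1 : Set H) = α '' (M.1 : Set H)) (h : L' = M') : L = M := by
  apply Subtype.ext
  have himg : α '' (L.1 : Set H) = α '' (M.1 : Set H) := by rw [← hLcar, ← hMcar, h]
  exact SetLike.ext' (Set.image_injective.mpr (sl_inj hα) himg)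

theorem img_lr (hcenter : CenterEqF F H) (hdim : Module.finrank F H = 4)
    (hpar : IsCliffordLike F H par) (hα : IsSemilinear F H α)
    (hpres : Preserves F H α par) (h1 : α 1 = 1)
    (M M' : Line F H) (h1M : (1:H) ∈ M.1)
    (hMcar : (M'.1 : Set H) = α '' (M.1 : Set H))
    (hM : parClass F H par M = leftClass F H M)
    (hM' : parClass F H par M' = rightClass F H M')
    {x : H} (hx0 : x ≠ 0) :
    α '' ((fun m => x * m) '' (M.1 : Set H)) = (fun m => m * α x) '' (M'.1 : Set H) := by
  obtain ⟨N, hNcar⟩ := exists_lineL hdim hx0 M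
  have hNl : N ∈ leftClass F H M := by
    show LeftPar F H N.1 M.1
    exact ⟨x⁻¹, inv_ne_zero hx0, by rw [hNcar, lmul_lmul_cancel hx0]⟩
  have hparNM : par N M := by
    have hmem : N ∈ parClass F H par M := by rw [hM]; exact hNl
    exact hmem
  obtain ⟨N', hN'car⟩ := exists_image_line hdim hα N
  have hparN'M' : par N' M' := (hpres N M N' M' hN'car hMcar).mp hparNM
  have hN'r : N' ∈ rightClass F H M' := by
    rw [← hM']
    exact hparN'M'
  have hxN : x ∈ N.1 := by
    have hmem : x ∈ (N.1 : Set H) := by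
      rw [hNcar]
      exact ⟨1, h1M, mul_one x⟩
    exact hmem
  have hαx : α x ∈ N'.1 := by
    have hmem : α x ∈ (N'.1 : Set H) := by
      rw [hN'car]
      exact ⟨x, hxN, rfl⟩
    exact hmem
  have h1M' : (1:H) ∈ M'.1 := one_mem_image h1 hMcar h1M
  have hthr := right_line_through hcenter hdim M' h1M' N' hN'r hαx (sl_ne_zero hα hx0)
  rw [← hthr, hN'car, hNcar]

theorem img_ll (hcenter : CenterEqF F H) (hdim : Module.finrank F H = 4)
    (hpar : IsCliffordLike F H par) (hα : IsSemilinear F H α)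
    (hpres : Preserves F H α par) (h1 : α 1 = 1)
    (M M' : Line F H) (h1M : (1:H) ∈ M.1)
    (hMcar : (M'.1 : Set H) = α '' (M.1 : Set H))
    (hM : parClass F H par M = leftClass F H M)
    (hM' : parClass F H par M' = leftClass F H M')
    {x : H} (hx0 : x ≠ 0) :
    α '' ((fun m => x * m) '' (M.1 : Set H)) = (fun m => α x * m) '' (M'.1 : Set H) := by
  obtain ⟨N, hNcar⟩ := exists_lineL hdim hx0 M
  have hNl : N ∈ leftClass F H M := by
    show LeftPar F H N.1 M.1
    exact ⟨x⁻¹, inv_ne_zero hx0, by rw [hNcar, lmul_lmul_cancel hx0]⟩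
  have hparNM : par N M := by
    have hmem : N ∈ parClass F H par M := by rw [hM]; exact hNl
    exact hmem
  obtain ⟨N', hN'car⟩ := exists_image_line hdim hα N
  have hparN'M' : par N' M' := (hpres N M N' M' hN'car hMcar).mp hparNM
  have hN'l : N' ∈ leftClass F H M' := by
    rw [← hM']
    exact hparN'M'
  have hxN : x ∈ N.1 := by
    have hmem : x ∈ (N.1 : Set H) := by
      rw [hNcar]
      exact ⟨1, h1M, mul_one x⟩
    exact hmem
  have hαx : α x ∈ N'.1 := by
    have hmem : α x ∈ (N'.1 : Set H) := by
      rw [hN'car]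
      exact ⟨x, hxN, rfl⟩
    exact hmem
  have h1M' : (1:H) ∈ M'.1 := one_mem_image h1 hMcar h1M
  have hthr := left_line_through hcenter hdim M' h1M' N' hN'l hαx (sl_ne_zero hα hx0)
  rw [← hthr, hN'car, hNcar]

theorem img_rr (hcenter : CenterEqF F H) (hdim : Module.finrank F H = 4)
    (hpar : IsCliffordLike F H par) (hα : IsSemilinear F H α)
    (hpres : Preserves F H α par) (h1 : α 1 = 1)
    (M M' : Line F H) (h1M : (1:H) ∈ M.1)
    (hMcar : (M'.1 : Set H) = α '' (M.1 : Set H))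
    (hM : parClass F H par M = rightClass F H M)
    (hM' : parClass F H par M' = rightClass F H M')
    {x : H} (hx0 : x ≠ 0) :
    α '' ((fun m => m * x) '' (M.1 : Set H)) = (fun m => m * α x) '' (M'.1 : Set H) := by
  obtain ⟨N, hNcar⟩ := exists_lineR hdim hx0 M
  have hNr : N ∈ rightClass F H M := by
    show RightPar F H N.1 M.1
    exact ⟨x⁻¹, inv_ne_zero hx0, by rw [hNcar, rmul_rmul_cancel hx0]⟩
  have hparNM : par N M := by
    have hmem : N ∈ parClass F H par M := by rw [hM]; exact hNr
    exact hmem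
  obtain ⟨N', hN'car⟩ := exists_image_line hdim hα N
  have hparN'M' : par N' M' := (hpres N M N' M' hN'car hMcar).mp hparNM
  have hN'r : N' ∈ rightClass F H M' := by
    rw [← hM']
    exact hparN'M'
  have hxN : x ∈ N.1 := by
    have hmem : x ∈ (N.1 : Set H) := by
      rw [hNcar]
      exact ⟨1, h1M, one_mul x⟩
    exact hmem
  have hαx : α x ∈ N'.1 := by
    have hmem : α x ∈ (N'.1 : Set H) := by
      rw [hN'car]
      exact ⟨x, hxN, rfl⟩
    exact hmem
  have h1M' : (1:H) ∈ M'.1 := one_mem_image h1 hMcar h1M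
  have hthr := right_line_through hcenter hdim M' h1M' N' hN'r hαx (sl_ne_zero hα hx0)
  rw [← hthr, hN'car, hNcar]

theorem img_rl (hcenter : CenterEqF F H) (hdim : Module.finrank F H = 4)
    (hpar : IsCliffordLike F H par) (hα : IsSemilinear F H α)
    (hpres : Preserves F H α par) (h1 : α 1 = 1)
    (M M' : Line F H) (h1M : (1:H) ∈ M.1)
    (hMcar : (M'.1 : Set H) = α '' (M.1 : Set H))
    (hM : parClass F H par M = rightClass F H M)
    (hM' : parClass F H par M' = leftClass F H M')
    {x : H} (hx0 : x ≠ 0) :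
    α '' ((fun m => m * x) '' (M.1 : Set H)) = (fun m => α x * m) '' (M'.1 : Set H) := by
  obtain ⟨N, hNcar⟩ := exists_lineR hdim hx0 M
  have hNr : N ∈ rightClass F H M := by
    show RightPar F H N.1 M.1
    exact ⟨x⁻¹, inv_ne_zero hx0, by rw [hNcar, rmul_rmul_cancel hx0]⟩
  have hparNM : par N M := by
    have hmem : N ∈ parClass F H par M := by rw [hM]; exact hNr
    exact hmem
  obtain ⟨N', hN'car⟩ := exists_image_line hdim hα N
  have hparN'M' : par N' M' := (hpres N M N' M' hN'car hMcar).mp hparNM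
  have hN'l : N' ∈ leftClass F H M' := by
    rw [← hM']
    exact hparN'M'
  have hxN : x ∈ N.1 := by
    have hmem : x ∈ (N.1 : Set H) := by
      rw [hNcar]
      exact ⟨1, h1M, one_mul x⟩
    exact hmem
  have hαx : α x ∈ N'.1 := by
    have hmem : α x ∈ (N'.1 : Set H) := by
      rw [hN'car]
      exact ⟨x, hxN, rfl⟩
    exact hmem
  have h1M' : (1:H) ∈ M'.1 := one_mem_image h1 hMcar h1M
  have hthr := left_line_through hcenter hdim M' h1M' N' hN'l hαx (sl_ne_zero hα hx0)
  rw [← hthr, hN'car, hNcar]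

end Par


section Key
open Module Submodule
variable {F H : Type*} [Field F] [DivisionRing H] [Algebra F H]
variable {par : Line F H → Line F H → Prop} {α : H → H}

theorem cover_escape (hdim : Module.finrank F H = 4) (Nx Ny : Line F H) :
    ∃ z : H, z ∉ Nx.1 ∧ z ∉ Ny.1 := by
  by_contra hc
  push_neg at hc
  have hcover : ∀ z : H, z ∈ Nx.1 ∨ z ∈ Ny.1 := by
    intro z
    by_cases hz1 : z ∈ Nx.1
    · exact Or.inl hz1
    · exact Or.inr (hc z hz1)
  haveI := myfd hdim
  rcases not_cover hcover with hA | hA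
  · have htop : Nx.1 = ⊤ := Submodule.eq_top_iff'.mpr hA
    have h2 := Nx.2
    rw [htop, finrank_top, hdim] at h2
    norm_num at h2
  · have htop : Ny.1 = ⊤ := Submodule.eq_top_iff'.mpr hA
    have h2 := Ny.2
    rw [htop, finrank_top, hdim] at h2
    norm_num at h2

theorem key_lr (hcenter : CenterEqF F H) (hdim : Module.finrank F H = 4)
    (hpar : IsCliffordLike F H par) (hα : IsSemilinear F H α)
    (hpres : Preserves F H α par) (h1 : α 1 = 1)
    (M M' : Line F H) (h1M : (1:H) ∈ M.1)
    (hMcar : (M'.1 : Set H) = α '' (M.1 : Set H))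
    (hM : parClass F H par M = leftClass F H M)
    (hM' : parClass F H par M' = rightClass F H M')
    {a : H} (ha : a ∈ M.1) : ∀ x : H, α (x * a) = α a * α x := by
  haveI := myfd hdim
  have hz := sl_zero hα
  have hinj := sl_inj hα
  have hadd : ∀ x y : H, α (x + y) = α x + α y := hα.2.1
  have h1M' : (1:H) ∈ M'.1 := one_mem_image h1 hMcar h1M
  set μ : H → H := fun x => α (x * a) * (α x)⁻¹ with hμdef
  have hmem : ∀ x : H, x ≠ 0 → μ x ∈ M'.1 ∧ μ x * α x = α (x * a) := by
    intro x hx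
    have himg : α (x * a) ∈ (fun m => m * α x) '' (M'.1 : Set H) := by
      rw [← img_lr hcenter hdim hpar hα hpres h1 M M' h1M hMcar hM hM' hx]
      exact ⟨x * a, ⟨a, ha, rfl⟩, rfl⟩
    obtain ⟨m, hmM, hme⟩ := himg
    simp only [] at hme
    have hμx : μ x = m := by
      show α (x * a) * (α x)⁻¹ = m
      rw [← hme, mul_inv_cancel_right₀ (sl_ne_zero hα hx)]
    exact ⟨hμx ▸ hmM, by rw [hμx, hme]⟩
  have hconst2 : ∀ x y : H, x ≠ 0 → y ≠ 0 →
      y ∉ (fun m => x * m) '' (M.1 : Set H) → μ x = μ y := by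
    intro x y hx hy hyM
    have hxy0 : x + y ≠ 0 := by
      intro h0
      apply hyM
      refine ⟨-1, M.1.neg_mem h1M, ?_⟩
      show x * (-1) = y
      rw [mul_neg_one]
      exact (eq_neg_of_add_eq_zero_right h0).symm
    obtain ⟨hm1M, he1⟩ := hmem x hx
    obtain ⟨hm2M, he2⟩ := hmem y hy
    obtain ⟨hm3M, he3⟩ := hmem _ hxy0
    have hkey : (μ (x + y) - μ x) * α x = (μ y - μ (x + y)) * α y := by
      have e : μ (x + y) * α x + μ (x + y) * α y = μ x * α x + μ y * α y := by
        rw [← mul_add, ← hadd, he3, add_mul, hadd, ← he1, ← he2]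
      rw [sub_mul, sub_mul, sub_eq_sub_iff_add_eq_add]
      rw [e]
      exact add_comm _ _
    by_cases h2 : μ y - μ (x + y) = 0
    · have h3 : μ (x + y) - μ x = 0 := by
        have h4 : (μ (x + y) - μ x) * α x = 0 := by rw [hkey, h2, zero_mul]
        rcases mul_eq_zero.mp h4 with h | h
        · exact h
        · exact absurd h (sl_ne_zero hα hx)
      have e1 : μ (x + y) = μ x := sub_eq_zero.mp h3
      have e2 : μ y = μ (x + y) := sub_eq_zero.mp h2
      rw [← e1]
      exact e2.symm
    · exfalso
      apply hyM
      have hαy : α y = (μ y - μ (x + y))⁻¹ * (μ (x + y) - μ x) * α x := by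
        rw [mul_assoc, hkey, ← mul_assoc, inv_mul_cancel₀ h2, one_mul]
      have hmemy : α y ∈ (fun m => m * α x) '' (M'.1 : Set H) := by
        refine ⟨(μ y - μ (x + y))⁻¹ * (μ (x + y) - μ x), ?_, ?_⟩
        · exact line_mul_mem hcenter hdim M' h1M' _
            (line_inv_mem hcenter hdim M' h1M' (M'.1.sub_mem hm2M hm3M) h2) _
            (M'.1.sub_mem hm3M hm1M)
        · show (μ y - μ (x + y))⁻¹ * (μ (x + y) - μ x) * α x = α y
          exact hαy.symm
      rw [← img_lr hcenter hdim hpar hα hpres h1 M M' h1M hMcar hM hM' hx] at hmemy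
      obtain ⟨w, hw, hweq⟩ := hmemy
      have hwy : w = y := hinj hweq
      rw [← hwy]
      exact hw
  have hcov : ∀ x y : H, x ≠ 0 → y ≠ 0 → μ x = μ y := by
    intro x y hx hy
    by_cases hcase : y ∈ (fun m => x * m) '' (M.1 : Set H)
    · obtain ⟨Nx, hNx⟩ := exists_lineL hdim hx M
      obtain ⟨Ny, hNy⟩ := exists_lineL hdim hy M
      obtain ⟨z, hzx, hzy⟩ := cover_escape hdim Nx Ny
      have hz0 : z ≠ 0 := fun h0 => hzx (h0 ▸ Nx.1.zero_mem)
      have hzx' : z ∉ (fun m => x * m) '' (M.1 : Set H) := by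
        intro hmem'
        exact hzx (by rw [← SetLike.mem_coe, hNx]; exact hmem')
      have hzy' : z ∉ (fun m => y * m) '' (M.1 : Set H) := by
        intro hmem'
        exact hzy (by rw [← SetLike.mem_coe, hNy]; exact hmem')
      rw [hconst2 x z hx hz0 hzx', hconst2 y z hy hz0 hzy']
    · exact hconst2 x y hx hy hcase
  intro x
  rcases eq_or_ne x 0 with rfl | hx
  · rw [zero_mul, hz, mul_zero]
  · have hμ1 : μ 1 = α a := by
      show α (1 * a) * (α 1)⁻¹ = α a
      rw [one_mul, h1, inv_one, mul_one]
    have hfin := (hmem x hx).2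
    rw [← hfin, hcov x 1 hx one_ne_zero, hμ1]

theorem key_ll (hcenter : CenterEqF F H) (hdim : Module.finrank F H = 4)
    (hpar : IsCliffordLike F H par) (hα : IsSemilinear F H α)
    (hpres : Preserves F H α par) (h1 : α 1 = 1)
    (M M' : Line F H) (h1M : (1:H) ∈ M.1)
    (hMcar : (M'.1 : Set H) = α '' (M.1 : Set H))
    (hM : parClass F H par M = leftClass F H M)
    (hM' : parClass F H par M' = leftClass F H M')
    {a : H} (ha : a ∈ M.1) : ∀ x : H, α (x * a) = α x * α a := by
  haveI := myfd hdim
  have hz := sl_zero hα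
  have hinj := sl_inj hα
  have hadd : ∀ x y : H, α (x + y) = α x + α y := hα.2.1
  have h1M' : (1:H) ∈ M'.1 := one_mem_image h1 hMcar h1M
  set μ : H → H := fun x => (α x)⁻¹ * α (x * a) with hμdef
  have hmem : ∀ x : H, x ≠ 0 → μ x ∈ M'.1 ∧ α x * μ x = α (x * a) := by
    intro x hx
    have himg : α (x * a) ∈ (fun m => α x * m) '' (M'.1 : Set H) := by
      rw [← img_ll hcenter hdim hpar hα hpres h1 M M' h1M hMcar hM hM' hx]
      exact ⟨x * a, ⟨a, ha, rfl⟩, rfl⟩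
    obtain ⟨m, hmM, hme⟩ := himg
    simp only [] at hme
    have hμx : μ x = m := by
      show (α x)⁻¹ * α (x * a) = m
      rw [← hme, inv_mul_cancel_left₀ (sl_ne_zero hα hx)]
    exact ⟨hμx ▸ hmM, by rw [hμx, hme]⟩
  have hconst2 : ∀ x y : H, x ≠ 0 → y ≠ 0 →
      y ∉ (fun m => x * m) '' (M.1 : Set H) → μ x = μ y := by
    intro x y hx hy hyM
    have hxy0 : x + y ≠ 0 := by
      intro h0
      apply hyM
      refine ⟨-1, M.1.neg_mem h1M, ?_⟩
      show x * (-1) = y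
      rw [mul_neg_one]
      exact (eq_neg_of_add_eq_zero_right h0).symm
    obtain ⟨hm1M, he1⟩ := hmem x hx
    obtain ⟨hm2M, he2⟩ := hmem y hy
    obtain ⟨hm3M, he3⟩ := hmem _ hxy0
    have hkey : α x * (μ (x + y) - μ x) = α y * (μ y - μ (x + y)) := by
      have e : α x * μ (x + y) + α y * μ (x + y) = α x * μ x + α y * μ y := by
        rw [← add_mul, ← hadd, he3, add_mul, hadd, ← he1, ← he2]
      rw [mul_sub, mul_sub, sub_eq_sub_iff_add_eq_add]
      rw [e]
      exact add_comm _ _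
    by_cases h2 : μ y - μ (x + y) = 0
    · have h3 : μ (x + y) - μ x = 0 := by
        have h4 : α x * (μ (x + y) - μ x) = 0 := by rw [hkey, h2, mul_zero]
        rcases mul_eq_zero.mp h4 with h | h
        · exact absurd h (sl_ne_zero hα hx)
        · exact h
      have e1 : μ (x + y) = μ x := sub_eq_zero.mp h3
      have e2 : μ y = μ (x + y) := sub_eq_zero.mp h2
      rw [← e1]
      exact e2.symm
    · exfalso
      apply hyM
      have hαy : α y = α x * ((μ (x + y) - μ x) * (μ y - μ (x + y))⁻¹) := by
        rw [← mul_assoc, hkey, mul_assoc, mul_inv_cancel₀ h2, mul_one]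
      have hmemy : α y ∈ (fun m => α x * m) '' (M'.1 : Set H) := by
        refine ⟨(μ (x + y) - μ x) * (μ y - μ (x + y))⁻¹, ?_, ?_⟩
        · exact line_mul_mem hcenter hdim M' h1M' _ (M'.1.sub_mem hm3M hm1M) _
            (line_inv_mem hcenter hdim M' h1M' (M'.1.sub_mem hm2M hm3M) h2)
        · show α x * ((μ (x + y) - μ x) * (μ y - μ (x + y))⁻¹) = α y
          exact hαy.symm
      rw [← img_ll hcenter hdim hpar hα hpres h1 M M' h1M hMcar hM hM' hx] at hmemy
      obtain ⟨w, hw, hweq⟩ := hmemy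
      have hwy : w = y := hinj hweq
      rw [← hwy]
      exact hw
  have hcov : ∀ x y : H, x ≠ 0 → y ≠ 0 → μ x = μ y := by
    intro x y hx hy
    by_cases hcase : y ∈ (fun m => x * m) '' (M.1 : Set H)
    · obtain ⟨Nx, hNx⟩ := exists_lineL hdim hx M
      obtain ⟨Ny, hNy⟩ := exists_lineL hdim hy M
      obtain ⟨z, hzx, hzy⟩ := cover_escape hdim Nx Ny
      have hz0 : z ≠ 0 := fun h0 => hzx (h0 ▸ Nx.1.zero_mem)
      have hzx' : z ∉ (fun m => x * m) '' (M.1 : Set H) := by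
        intro hmem'
        exact hzx (by rw [← SetLike.mem_coe, hNx]; exact hmem')
      have hzy' : z ∉ (fun m => y * m) '' (M.1 : Set H) := by
        intro hmem'
        exact hzy (by rw [← SetLike.mem_coe, hNy]; exact hmem')
      rw [hconst2 x z hx hz0 hzx', hconst2 y z hy hz0 hzy']
    · exact hconst2 x y hx hy hcase
  intro x
  rcases eq_or_ne x 0 with rfl | hx
  · rw [zero_mul, hz, zero_mul]
  · have hμ1 : μ 1 = α a := by
      show (α 1)⁻¹ * α (1 * a) = α a
      rw [one_mul, h1, inv_one, one_mul]
    have hfin := (hmem x hx).2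
    rw [← hfin, hcov x 1 hx one_ne_zero, hμ1]

theorem key_rr (hcenter : CenterEqF F H) (hdim : Module.finrank F H = 4)
    (hpar : IsCliffordLike F H par) (hα : IsSemilinear F H α)
    (hpres : Preserves F H α par) (h1 : α 1 = 1)
    (M M' : Line F H) (h1M : (1:H) ∈ M.1)
    (hMcar : (M'.1 : Set H) = α '' (M.1 : Set H))
    (hM : parClass F H par M = rightClass F H M)
    (hM' : parClass F H par M' = rightClass F H M')
    {a : H} (ha : a ∈ M.1) : ∀ x : H, α (a * x) = α a * α x := by
  haveI := myfd hdim
  have hz := sl_zero hα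
  have hinj := sl_inj hα
  have hadd : ∀ x y : H, α (x + y) = α x + α y := hα.2.1
  have h1M' : (1:H) ∈ M'.1 := one_mem_image h1 hMcar h1M
  set μ : H → H := fun x => α (a * x) * (α x)⁻¹ with hμdef
  have hmem : ∀ x : H, x ≠ 0 → μ x ∈ M'.1 ∧ μ x * α x = α (a * x) := by
    intro x hx
    have himg : α (a * x) ∈ (fun m => m * α x) '' (M'.1 : Set H) := by
      rw [← img_rr hcenter hdim hpar hα hpres h1 M M' h1M hMcar hM hM' hx]
      exact ⟨a * x, ⟨a, ha, rfl⟩, rfl⟩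
    obtain ⟨m, hmM, hme⟩ := himg
    simp only [] at hme
    have hμx : μ x = m := by
      show α (a * x) * (α x)⁻¹ = m
      rw [← hme, mul_inv_cancel_right₀ (sl_ne_zero hα hx)]
    exact ⟨hμx ▸ hmM, by rw [hμx, hme]⟩
  have hconst2 : ∀ x y : H, x ≠ 0 → y ≠ 0 →
      y ∉ (fun m => m * x) '' (M.1 : Set H) → μ x = μ y := by
    intro x y hx hy hyM
    have hxy0 : x + y ≠ 0 := by
      intro h0
      apply hyM
      refine ⟨-1, M.1.neg_mem h1M, ?_⟩
      show (-1) * x = y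
      rw [neg_one_mul]
      exact (eq_neg_of_add_eq_zero_right h0).symm
    obtain ⟨hm1M, he1⟩ := hmem x hx
    obtain ⟨hm2M, he2⟩ := hmem y hy
    obtain ⟨hm3M, he3⟩ := hmem _ hxy0
    have hkey : (μ (x + y) - μ x) * α x = (μ y - μ (x + y)) * α y := by
      have e : μ (x + y) * α x + μ (x + y) * α y = μ x * α x + μ y * α y := by
        rw [← mul_add, ← hadd, he3, mul_add, hadd, ← he1, ← he2]
      rw [sub_mul, sub_mul, sub_eq_sub_iff_add_eq_add]
      rw [e]
      exact add_comm _ _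
    by_cases h2 : μ y - μ (x + y) = 0
    · have h3 : μ (x + y) - μ x = 0 := by
        have h4 : (μ (x + y) - μ x) * α x = 0 := by rw [hkey, h2, zero_mul]
        rcases mul_eq_zero.mp h4 with h | h
        · exact h
        · exact absurd h (sl_ne_zero hα hx)
      have e1 : μ (x + y) = μ x := sub_eq_zero.mp h3
      have e2 : μ y = μ (x + y) := sub_eq_zero.mp h2
      rw [← e1]
      exact e2.symm
    · exfalso
      apply hyM
      have hαy : α y = (μ y - μ (x + y))⁻¹ * (μ (x + y) - μ x) * α x := by
        rw [mul_assoc, hkey, ← mul_assoc, inv_mul_cancel₀ h2, one_mul]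
      have hmemy : α y ∈ (fun m => m * α x) '' (M'.1 : Set H) := by
        refine ⟨(μ y - μ (x + y))⁻¹ * (μ (x + y) - μ x), ?_, ?_⟩
        · exact line_mul_mem hcenter hdim M' h1M' _
            (line_inv_mem hcenter hdim M' h1M' (M'.1.sub_mem hm2M hm3M) h2) _
            (M'.1.sub_mem hm3M hm1M)
        · show (μ y - μ (x + y))⁻¹ * (μ (x + y) - μ x) * α x = α y
          exact hαy.symm
      rw [← img_rr hcenter hdim hpar hα hpres h1 M M' h1M hMcar hM hM' hx] at hmemy
      obtain ⟨w, hw, hweq⟩ := hmemy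
      have hwy : w = y := hinj hweq
      rw [← hwy]
      exact hw
  have hcov : ∀ x y : H, x ≠ 0 → y ≠ 0 → μ x = μ y := by
    intro x y hx hy
    by_cases hcase : y ∈ (fun m => m * x) '' (M.1 : Set H)
    · obtain ⟨Nx, hNx⟩ := exists_lineR hdim hx M
      obtain ⟨Ny, hNy⟩ := exists_lineR hdim hy M
      obtain ⟨z, hzx, hzy⟩ := cover_escape hdim Nx Ny
      have hz0 : z ≠ 0 := fun h0 => hzx (h0 ▸ Nx.1.zero_mem)
      have hzx' : z ∉ (fun m => m * x) '' (M.1 : Set H) := by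
        intro hmem'
        exact hzx (by rw [← SetLike.mem_coe, hNx]; exact hmem')
      have hzy' : z ∉ (fun m => m * y) '' (M.1 : Set H) := by
        intro hmem'
        exact hzy (by rw [← SetLike.mem_coe, hNy]; exact hmem')
      rw [hconst2 x z hx hz0 hzx', hconst2 y z hy hz0 hzy']
    · exact hconst2 x y hx hy hcase
  intro x
  rcases eq_or_ne x 0 with rfl | hx
  · rw [mul_zero, hz, mul_zero]
  · have hμ1 : μ 1 = α a := by
      show α (a * 1) * (α 1)⁻¹ = α a
      rw [mul_one, h1, inv_one, mul_one]
    have hfin := (hmem x hx).2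
    rw [← hfin, hcov x 1 hx one_ne_zero, hμ1]

theorem key_rl (hcenter : CenterEqF F H) (hdim : Module.finrank F H = 4)
    (hpar : IsCliffordLike F H par) (hα : IsSemilinear F H α)
    (hpres : Preserves F H α par) (h1 : α 1 = 1)
    (M M' : Line F H) (h1M : (1:H) ∈ M.1)
    (hMcar : (M'.1 : Set H) = α '' (M.1 : Set H))
    (hM : parClass F H par M = rightClass F H M)
    (hM' : parClass F H par M' = leftClass F H M')
    {a : H} (ha : a ∈ M.1) : ∀ x : H, α (a * x) = α x * α a := by
  haveI := myfd hdim
  have hz := sl_zero hα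
  have hinj := sl_inj hα
  have hadd : ∀ x y : H, α (x + y) = α x + α y := hα.2.1
  have h1M' : (1:H) ∈ M'.1 := one_mem_image h1 hMcar h1M
  set μ : H → H := fun x => (α x)⁻¹ * α (a * x) with hμdef
  have hmem : ∀ x : H, x ≠ 0 → μ x ∈ M'.1 ∧ α x * μ x = α (a * x) := by
    intro x hx
    have himg : α (a * x) ∈ (fun m => α x * m) '' (M'.1 : Set H) := by
      rw [← img_rl hcenter hdim hpar hα hpres h1 M M' h1M hMcar hM hM' hx]
      exact ⟨a * x, ⟨a, ha, rfl⟩, rfl⟩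
    obtain ⟨m, hmM, hme⟩ := himg
    simp only [] at hme
    have hμx : μ x = m := by
      show (α x)⁻¹ * α (a * x) = m
      rw [← hme, inv_mul_cancel_left₀ (sl_ne_zero hα hx)]
    exact ⟨hμx ▸ hmM, by rw [hμx, hme]⟩
  have hconst2 : ∀ x y : H, x ≠ 0 → y ≠ 0 →
      y ∉ (fun m => m * x) '' (M.1 : Set H) → μ x = μ y := by
    intro x y hx hy hyM
    have hxy0 : x + y ≠ 0 := by
      intro h0
      apply hyM
      refine ⟨-1, M.1.neg_mem h1M, ?_⟩
      show (-1) * x = y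
      rw [neg_one_mul]
      exact (eq_neg_of_add_eq_zero_right h0).symm
    obtain ⟨hm1M, he1⟩ := hmem x hx
    obtain ⟨hm2M, he2⟩ := hmem y hy
    obtain ⟨hm3M, he3⟩ := hmem _ hxy0
    have hkey : α x * (μ (x + y) - μ x) = α y * (μ y - μ (x + y)) := by
      have e : α x * μ (x + y) + α y * μ (x + y) = α x * μ x + α y * μ y := by
        rw [← add_mul, ← hadd, he3, mul_add, hadd, ← he1, ← he2]
      rw [mul_sub, mul_sub, sub_eq_sub_iff_add_eq_add]
      rw [e]
      exact add_comm _ _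
    by_cases h2 : μ y - μ (x + y) = 0
    · have h3 : μ (x + y) - μ x = 0 := by
        have h4 : α x * (μ (x + y) - μ x) = 0 := by rw [hkey, h2, mul_zero]
        rcases mul_eq_zero.mp h4 with h | h
        · exact absurd h (sl_ne_zero hα hx)
        · exact h
      have e1 : μ (x + y) = μ x := sub_eq_zero.mp h3
      have e2 : μ y = μ (x + y) := sub_eq_zero.mp h2
      rw [← e1]
      exact e2.symm
    · exfalso
      apply hyM
      have hαy : α y = α x * ((μ (x + y) - μ x) * (μ y - μ (x + y))⁻¹) := by
        rw [← mul_assoc, hkey, mul_assoc, mul_inv_cancel₀ h2, mul_one]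
      have hmemy : α y ∈ (fun m => α x * m) '' (M'.1 : Set H) := by
        refine ⟨(μ (x + y) - μ x) * (μ y - μ (x + y))⁻¹, ?_, ?_⟩
        · exact line_mul_mem hcenter hdim M' h1M' _ (M'.1.sub_mem hm3M hm1M) _
            (line_inv_mem hcenter hdim M' h1M' (M'.1.sub_mem hm2M hm3M) h2)
        · show α x * ((μ (x + y) - μ x) * (μ y - μ (x + y))⁻¹) = α y
          exact hαy.symm
      rw [← img_rl hcenter hdim hpar hα hpres h1 M M' h1M hMcar hM hM' hx] at hmemy
      obtain ⟨w, hw, hweq⟩ := hmemy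
      have hwy : w = y := hinj hweq
      rw [← hwy]
      exact hw
  have hcov : ∀ x y : H, x ≠ 0 → y ≠ 0 → μ x = μ y := by
    intro x y hx hy
    by_cases hcase : y ∈ (fun m => m * x) '' (M.1 : Set H)
    · obtain ⟨Nx, hNx⟩ := exists_lineR hdim hx M
      obtain ⟨Ny, hNy⟩ := exists_lineR hdim hy M
      obtain ⟨z, hzx, hzy⟩ := cover_escape hdim Nx Ny
      have hz0 : z ≠ 0 := fun h0 => hzx (h0 ▸ Nx.1.zero_mem)
      have hzx' : z ∉ (fun m => m * x) '' (M.1 : Set H) := by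
        intro hmem'
        exact hzx (by rw [← SetLike.mem_coe, hNx]; exact hmem')
      have hzy' : z ∉ (fun m => m * y) '' (M.1 : Set H) := by
        intro hmem'
        exact hzy (by rw [← SetLike.mem_coe, hNy]; exact hmem')
      rw [hconst2 x z hx hz0 hzx', hconst2 y z hy hz0 hzy']
    · exact hconst2 x y hx hy hcase
  intro x
  rcases eq_or_ne x 0 with rfl | hx
  · rw [mul_zero, hz, zero_mul]
  · have hμ1 : μ 1 = α a := by
      show (α 1)⁻¹ * α (a * 1) = α a
      rw [mul_one, h1, inv_one, one_mul]
    have hfin := (hmem x hx).2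
    rw [← hfin, hcov x 1 hx one_ne_zero, hμ1]

end Key


section Prop1
open Module Submodule
variable {F H : Type*} [Field F] [DivisionRing H] [Algebra F H]
variable {par : Line F H → Line F H → Prop} {α : H → H}

theorem propagate (hcenter : CenterEqF F H) (hdim : Module.finrank F H = 4)
    (hpar : IsCliffordLike F H par) (hα : IsSemilinear F H α)
    (hpres : Preserves F H α par) (h1 : α 1 = 1)
    (L L' M M' : Line F H)
    (h1L : (1:H) ∈ L.1) (hLcar : (L'.1 : Set H) = α '' (L.1 : Set H))
    (h1M : (1:H) ∈ M.1) (hMcar : (M'.1 : Set H) = α '' (M.1 : Set H))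
    (hw : (parClass F H par L = leftClass F H L ∧ parClass F H par L' = leftClass F H L') ∨
          (parClass F H par L = rightClass F H L ∧ parClass F H par L' = rightClass F H L')) :
    (parClass F H par M = leftClass F H M → parClass F H par M' = leftClass F H M') ∧
    (parClass F H par M = rightClass F H M → parClass F H par M' = rightClass F H M') := by
  have h1L' : (1:H) ∈ L'.1 := one_mem_image h1 hLcar h1L
  have h1M' : (1:H) ∈ M'.1 := one_mem_image h1 hMcar h1M
  obtain ⟨a, haM, ha1⟩ := line_not_span_one hdim M
  obtain ⟨b, hbL, hb1⟩ := line_not_span_one hdim L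
  have hαaM' : α a ∈ M'.1 := by
    have h : α a ∈ (M'.1 : Set H) := by rw [hMcar]; exact ⟨a, haM, rfl⟩
    exact h
  have hαbL' : α b ∈ L'.1 := by
    have h : α b ∈ (L'.1 : Set H) := by rw [hLcar]; exact ⟨b, hbL, rfl⟩
    exact h
  have hαa1 := sl_not_span_one hα h1 ha1
  have hαb1 := sl_not_span_one hα h1 hb1
  constructor
  · intro hM
    rcases hpar.2 M' with hM'l | hM'r
    · exact hM'l
    rcases hw with ⟨hLl, hL'l⟩ | ⟨hLr, hL'r⟩
    · have u1 : α (b * a) = α a * α b :=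
        key_lr hcenter hdim hpar hα hpres h1 M M' h1M hMcar hM hM'r haM b
      have u2 : α (a * b) = α a * α b :=
        key_ll hcenter hdim hpar hα hpres h1 L L' h1L hLcar hLl hL'l hbL a
      have hab : a * b = b * a := sl_inj hα (u2.trans u1.symm)
      have hbM : b ∈ M.1 := by
        have hc := cent hcenter hdim ha1 hab
        rwa [← line_eq_span_one hdim M h1M haM ha1] at hc
      have hLM : L = M := lines_eq_of_common hdim L M h1L h1M hbL hbM hb1
      have hL'M' : L' = M' := img_lines_eq L M L' M' hLcar hMcar hLM
      rw [← hL'M']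
      exact hL'l
    · have u1 : α (b * a) = α a * α b :=
        key_lr hcenter hdim hpar hα hpres h1 M M' h1M hMcar hM hM'r haM b
      have u2 : α (b * a) = α b * α a :=
        key_rr hcenter hdim hpar hα hpres h1 L L' h1L hLcar hLr hL'r hbL a
      have hab : α a * α b = α b * α a := u1.symm.trans u2
      have hαbM' : α b ∈ M'.1 := by
        have hc := cent hcenter hdim hαa1 hab
        rwa [← line_eq_span_one hdim M' h1M' hαaM' hαa1] at hc
      have hL'M' : L' = M' := lines_eq_of_common hdim L' M' h1L' h1M' hαbL' hαbM' hαb1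
      have hLM : L = M := dom_lines_eq hα L M L' M' hLcar hMcar hL'M'
      exfalso
      refine left_ne_right hcenter hdim M h1M (hM.symm.trans ?_)
      rw [← hLM]
      exact hLr
  · intro hM
    rcases hpar.2 M' with hM'l | hM'r
    swap
    · exact hM'r
    rcases hw with ⟨hLl, hL'l⟩ | ⟨hLr, hL'r⟩
    · have u1 : α (a * b) = α b * α a :=
        key_rl hcenter hdim hpar hα hpres h1 M M' h1M hMcar hM hM'l haM b
      have u2 : α (a * b) = α a * α b :=
        key_ll hcenter hdim hpar hα hpres h1 L L' h1L hLcar hLl hL'l hbL a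
      have hab : α a * α b = α b * α a := u2.symm.trans u1
      have hαbM' : α b ∈ M'.1 := by
        have hc := cent hcenter hdim hαa1 hab
        rwa [← line_eq_span_one hdim M' h1M' hαaM' hαa1] at hc
      have hL'M' : L' = M' := lines_eq_of_common hdim L' M' h1L' h1M' hαbL' hαbM' hαb1
      have hLM : L = M := dom_lines_eq hα L M L' M' hLcar hMcar hL'M'
      exfalso
      have hMleft : parClass F H par M = leftClass F H M := by
        rw [← hLM]; exact hLl
      exact left_ne_right hcenter hdim M h1M (hMleft.symm.trans hM)
    · have u1 : α (a * b) = α b * α a :=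
        key_rl hcenter hdim hpar hα hpres h1 M M' h1M hMcar hM hM'l haM b
      have u2 : α (b * a) = α b * α a :=
        key_rr hcenter hdim hpar hα hpres h1 L L' h1L hLcar hLr hL'r hbL a
      have hab : a * b = b * a := sl_inj hα (u1.trans u2.symm)
      have hbM : b ∈ M.1 := by
        have hc := cent hcenter hdim ha1 hab
        rwa [← line_eq_span_one hdim M h1M haM ha1] at hc
      have hLM : L = M := lines_eq_of_common hdim L M h1L h1M hbL hbM hb1
      have hL'M' : L' = M' := img_lines_eq L M L' M' hLcar hMcar hLM
      rw [← hL'M']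
      exact hL'r

theorem propagate_flip (hcenter : CenterEqF F H) (hdim : Module.finrank F H = 4)
    (hpar : IsCliffordLike F H par) (hα : IsSemilinear F H α)
    (hpres : Preserves F H α par) (h1 : α 1 = 1)
    (L L' M M' : Line F H)
    (h1L : (1:H) ∈ L.1) (hLcar : (L'.1 : Set H) = α '' (L.1 : Set H))
    (h1M : (1:H) ∈ M.1) (hMcar : (M'.1 : Set H) = α '' (M.1 : Set H))
    (hw : (parClass F H par L = leftClass F H L ∧ parClass F H par L' = rightClass F H L') ∨
          (parClass F H par L = rightClass F H L ∧ parClass F H par L' = leftClass F H L')) :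
    (parClass F H par M = leftClass F H M → parClass F H par M' = rightClass F H M') ∧
    (parClass F H par M = rightClass F H M → parClass F H par M' = leftClass F H M') := by
  have h1L' : (1:H) ∈ L'.1 := one_mem_image h1 hLcar h1L
  have h1M' : (1:H) ∈ M'.1 := one_mem_image h1 hMcar h1M
  obtain ⟨a, haM, ha1⟩ := line_not_span_one hdim M
  obtain ⟨b, hbL, hb1⟩ := line_not_span_one hdim L
  have hαaM' : α a ∈ M'.1 := by
    have h : α a ∈ (M'.1 : Set H) := by rw [hMcar]; exact ⟨a, haM, rfl⟩
    exact h
  have hαbL' : α b ∈ L'.1 := by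
    have h : α b ∈ (L'.1 : Set H) := by rw [hLcar]; exact ⟨b, hbL, rfl⟩
    exact h
  have hαa1 := sl_not_span_one hα h1 ha1
  have hαb1 := sl_not_span_one hα h1 hb1
  constructor
  · intro hM
    rcases hpar.2 M' with hM'l | hM'r
    swap
    · exact hM'r
    rcases hw with ⟨hLl, hL'r⟩ | ⟨hLr, hL'l⟩
    · have u1 : α (a * b) = α b * α a :=
        key_lr hcenter hdim hpar hα hpres h1 L L' h1L hLcar hLl hL'r hbL a
      have u2 : α (b * a) = α b * α a :=
        key_ll hcenter hdim hpar hα hpres h1 M M' h1M hMcar hM hM'l haM b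
      have hab : a * b = b * a := sl_inj hα (u1.trans u2.symm)
      have hbM : b ∈ M.1 := by
        have hc := cent hcenter hdim ha1 hab
        rwa [← line_eq_span_one hdim M h1M haM ha1] at hc
      have hLM : L = M := lines_eq_of_common hdim L M h1L h1M hbL hbM hb1
      have hL'M' : L' = M' := img_lines_eq L M L' M' hLcar hMcar hLM
      rw [← hL'M']
      exact hL'r
    · have u1 : α (b * a) = α a * α b :=
        key_rl hcenter hdim hpar hα hpres h1 L L' h1L hLcar hLr hL'l hbL a
      have u2 : α (b * a) = α b * α a :=
        key_ll hcenter hdim hpar hα hpres h1 M M' h1M hMcar hM hM'l haM b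
      have hab : α a * α b = α b * α a := u1.symm.trans u2
      have hαbM' : α b ∈ M'.1 := by
        have hc := cent hcenter hdim hαa1 hab
        rwa [← line_eq_span_one hdim M' h1M' hαaM' hαa1] at hc
      have hL'M' : L' = M' := lines_eq_of_common hdim L' M' h1L' h1M' hαbL' hαbM' hαb1
      have hLM : L = M := dom_lines_eq hα L M L' M' hLcar hMcar hL'M'
      exfalso
      have hMright : parClass F H par M = rightClass F H M := by
        rw [← hLM]; exact hLr
      exact left_ne_right hcenter hdim M h1M (hM.symm.trans hMright)
  · intro hM
    rcases hpar.2 M' with hM'l | hM'r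
    · exact hM'l
    rcases hw with ⟨hLl, hL'r⟩ | ⟨hLr, hL'l⟩
    · have u1 : α (a * b) = α b * α a :=
        key_lr hcenter hdim hpar hα hpres h1 L L' h1L hLcar hLl hL'r hbL a
      have u2 : α (a * b) = α a * α b :=
        key_rr hcenter hdim hpar hα hpres h1 M M' h1M hMcar hM hM'r haM b
      have hab : α a * α b = α b * α a := u2.symm.trans u1
      have hαbM' : α b ∈ M'.1 := by
        have hc := cent hcenter hdim hαa1 hab
        rwa [← line_eq_span_one hdim M' h1M' hαaM' hαa1] at hc
      have hL'M' : L' = M' := lines_eq_of_common hdim L' M' h1L' h1M' hαbL' hαbM' hαb1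
      have hLM : L = M := dom_lines_eq hα L M L' M' hLcar hMcar hL'M'
      exfalso
      have hMleft : parClass F H par M = leftClass F H M := by
        rw [← hLM]; exact hLl
      exact left_ne_right hcenter hdim M h1M (hMleft.symm.trans hM)
    · have u1 : α (b * a) = α a * α b :=
        key_rl hcenter hdim hpar hα hpres h1 L L' h1L hLcar hLr hL'l hbL a
      have u2 : α (a * b) = α a * α b :=
        key_rr hcenter hdim hpar hα hpres h1 M M' h1M hMcar hM hM'r haM b
      have hab : b * a = a * b := sl_inj hα (u1.trans u2.symm)
      have hbM : b ∈ M.1 := by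
        have hc := cent hcenter hdim ha1 hab.symm
        rwa [← line_eq_span_one hdim M h1M haM ha1] at hc
      have hLM : L = M := lines_eq_of_common hdim L M h1L h1M hbL hbM hb1
      have hL'M' : L' = M' := img_lines_eq L M L' M' hLcar hMcar hLM
      rw [← hL'M']
      exact hL'l

end Prop1


/-- Let `α` be a `∥`-preserving semilinear bijection with `α(1) = 1`. If for some line
`L ∈ 𝒜` the classes `S(L)` and `S(α(L))` are of the same kind then `α(ℱ) = ℱ`; if they
are of different kind then `α(ℱ) = 𝒜 \ ℱ`. -/
theorem preserving_semilinear_calF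
    (hcenter : CenterEqF F H) (hdim : Module.finrank F H = 4)
    (par : Line F H → Line F H → Prop) (hpar : IsCliffordLike F H par)
    (α : H → H) (hα : IsSemilinear F H α)
    (hpres : Preserves F H α par) (h1 : α 1 = 1) :
    ((∃ L L' : Line F H, (1 : H) ∈ L.1 ∧ (L'.1 : Set H) = α '' (L.1 : Set H) ∧
        ((parClass F H par L = leftClass F H L ∧
            parClass F H par L' = leftClass F H L') ∨
         (parClass F H par L = rightClass F H L ∧
            parClass F H par L' = rightClass F H L'))) →
      imageLines F H α (calF F H par) = calF F H par) ∧
    ((∃ L L' : Line F H, (1 : H) ∈ L.1 ∧ (L'.1 : Set H) = α '' (L.1 : Set H) ∧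
        ((parClass F H par L = leftClass F H L ∧
            parClass F H par L' = rightClass F H L') ∨
         (parClass F H par L = rightClass F H L ∧
            parClass F H par L' = leftClass F H L'))) →
      imageLines F H α (calF F H par) = starLines F H \ calF F H par) := by
  obtain ⟨β, hβ, hαβ, hβα⟩ := inv_semilinear hα
  have hβ1 : β (1 : H) = 1 := by
    have h := hβα 1
    rwa [h1] at h
  constructor
  · rintro ⟨L, L', h1L, hLcar, hw⟩
    apply Set.Subset.antisymm
    · rintro M' ⟨M, hMF, hMcar⟩
      obtain ⟨h1M, hMl⟩ := hMF
      exact ⟨one_mem_image h1 hMcar h1M,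
        (propagate hcenter hdim hpar hα hpres h1 L L' M M' h1L hLcar h1M hMcar hw).1 hMl⟩
    · intro M' hM'F
      obtain ⟨h1M', hM'l⟩ := hM'F
      obtain ⟨M, hMcar'⟩ := exists_image_line hdim hβ M'
      have hMcar : (M'.1 : Set H) = α '' (M.1 : Set H) := by
        rw [hMcar', Set.image_image]
        simp only [hαβ, Set.image_id']
      have h1M : (1 : H) ∈ M.1 := by
        have h : (1 : H) ∈ (M.1 : Set H) := by
          rw [hMcar']
          exact ⟨1, h1M', hβ1⟩
        exact h
      refine ⟨M, ⟨h1M, ?_⟩, hMcar⟩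
      rcases hpar.2 M with hMl | hMr
      · exact hMl
      · exfalso
        have hres := (propagate hcenter hdim hpar hα hpres h1 L L' M M'
          h1L hLcar h1M hMcar hw).2 hMr
        exact left_ne_right hcenter hdim M' h1M' (hM'l.symm.trans hres)
  · rintro ⟨L, L', h1L, hLcar, hw⟩
    apply Set.Subset.antisymm
    · rintro M' ⟨M, hMF, hMcar⟩
      obtain ⟨h1M, hMl⟩ := hMF
      have h1M' := one_mem_image h1 hMcar h1M
      have hres := (propagate_flip hcenter hdim hpar hα hpres h1 L L' M M'
        h1L hLcar h1M hMcar hw).1 hMl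
      refine ⟨h1M', ?_⟩
      intro hM'F
      exact left_ne_right hcenter hdim M' h1M' (hM'F.2.symm.trans hres)
    · rintro M' ⟨hM'star, hM'notF⟩
      have h1M' : (1 : H) ∈ M'.1 := hM'star
      have hM'r : parClass F H par M' = rightClass F H M' := by
        rcases hpar.2 M' with h | h
        · exact absurd ⟨h1M', h⟩ hM'notF
        · exact h
      obtain ⟨M, hMcar'⟩ := exists_image_line hdim hβ M'
      have hMcar : (M'.1 : Set H) = α '' (M.1 : Set H) := by
        rw [hMcar', Set.image_image]
        simp only [hαβ, Set.image_id']
      have h1M : (1 : H) ∈ M.1 := by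
        have h : (1 : H) ∈ (M.1 : Set H) := by
          rw [hMcar']
          exact ⟨1, h1M', hβ1⟩
        exact h
      refine ⟨M, ⟨h1M, ?_⟩, hMcar⟩
      rcases hpar.2 M with hMl | hMr
      · exact hMl
      · exfalso
        have hres := (propagate_flip hcenter hdim hpar hα hpres h1 L L' M M'
          h1L hLcar h1M hMcar hw).2 hMr
        exact left_ne_right hcenter hdim M' h1M' (hres.symm.trans hM'r)
end
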